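/- arXiv:1105.5145 — 3 statements merged into one kernel-verified Lean document; each statement's English description precedes it below -/
import Mathlib

section
/- Let $(a_n)$ be a convex, decreasing, positive sequence with $a_n \log n \to 0$, let $f(t) = \sum_{j=0}^{\infty}(j+1)(a_j - 2a_{j+1} + a_{j+2}) F_j(t)$ with $F_j$ the Fejér kernel. Then $\int_{-1/2}^{1/2} |f(t) - S_N(f,t)|\,dt \to 0$ as $N \to \infty$, where $S_N(f,t) = \sum_{|n| \le N} \hat{f}(n) e^{2\pi i n t}$ is the $N$th Fourier partial sum; in particular $\lim_{N\to\infty}\int |f - S_N(f)|\,dt$ exists. -/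
open Real Set Finset Filter Topology MeasureTheory

/-- The `j`th Fejér kernel. -/
noncomputable def fejer (j : ℕ) (t : ℝ) : ℝ :=
  ∑ n ∈ Finset.Icc (-(j : ℤ)) (j : ℤ),
    (1 - |(n : ℝ)| / (j + 1)) * Real.cos (2 * Real.pi * n * t)

/-- The symmetric Dirichlet-type kernel. -/
noncomputable def DD (n : ℕ) (t : ℝ) : ℝ :=
  1 + 2 * ∑ k ∈ Finset.Icc 1 n, Real.cos (2 * Real.pi * k * t)


lemma sum_sym (j : ℕ) (h : ℤ → ℝ) (he : ∀ n, h (-n) = h n) :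
    ∑ n ∈ Finset.Icc (-(j:ℤ)) (j:ℤ), h n = h 0 + 2 * ∑ k ∈ Finset.Icc (1:ℤ) j, h k := by
  have hsplit : Finset.Icc (-(j:ℤ)) (j:ℤ) = Finset.Icc (-(j:ℤ)) (-1) ∪ Finset.Icc 0 (j:ℤ) := by
    ext n; simp [Finset.mem_Icc, Finset.mem_union]; omega
  have hdisj : Disjoint (Finset.Icc (-(j:ℤ)) (-1)) (Finset.Icc 0 (j:ℤ)) := by
    rw [Finset.disjoint_left]; intro n hn hn'; simp [Finset.mem_Icc] at hn hn'; omega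
  rw [hsplit, Finset.sum_union hdisj]
  have h1 : ∑ n ∈ Finset.Icc (-(j:ℤ)) (-1), h n = ∑ k ∈ Finset.Icc (1:ℤ) j, h k := by
    apply Finset.sum_nbij' (fun n => -n) (fun n => -n)
    · intro n hn; simp [Finset.mem_Icc] at hn ⊢; omega
    · intro n hn; simp [Finset.mem_Icc] at hn ⊢; omega
    · intro n _; ring
    · intro n _; ring
    · intro n _; exact (he n).symm
  have h2 : ∑ n ∈ Finset.Icc (0:ℤ) (j:ℤ), h n = h 0 + ∑ k ∈ Finset.Icc (1:ℤ) j, h k := by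
    have : Finset.Icc (0:ℤ) (j:ℤ) = insert 0 (Finset.Icc 1 (j:ℤ)) := by
      ext n; simp [Finset.mem_Icc, Finset.mem_insert]; omega
    rw [this, Finset.sum_insert (by simp)]
  rw [h1, h2]; ring

lemma sum_Icc_int_nat (j : ℕ) (g : ℤ → ℝ) :
    ∑ k ∈ Finset.Icc (1:ℤ) (j:ℤ), g k = ∑ k ∈ Finset.Icc 1 j, g (k:ℤ) := by
  apply Finset.sum_nbij' (fun n => Int.toNat n) (fun n => (n:ℤ))
  · intro n hn; simp [Finset.mem_Icc] at hn ⊢; omega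
  · intro n hn; simp [Finset.mem_Icc] at hn ⊢; omega
  · intro n hn; simp [Finset.mem_Icc] at hn; omega
  · intro n hn; simp
  · intro n hn; simp [Finset.mem_Icc] at hn; congr 1; omega

lemma fejer_eq (j : ℕ) (t : ℝ) :
    fejer j t = 1 + 2 * ∑ k ∈ Finset.Icc 1 j,
      (1 - (k:ℝ)/(j+1)) * Real.cos (2 * Real.pi * k * t) := by
  unfold fejer
  rw [sum_sym j (fun n => (1 - |(n : ℝ)| / (j + 1)) * Real.cos (2 * Real.pi * n * t))]
  · rw [sum_Icc_int_nat j (fun n => (1 - |(n : ℝ)| / (j + 1)) * Real.cos (2 * Real.pi * n * t))]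
    simp only [Int.cast_natCast]
    have : ∀ k ∈ Finset.Icc 1 j, (1 - |(k : ℝ)| / (j + 1)) * Real.cos (2 * Real.pi * k * t)
        = (1 - (k:ℝ)/(j+1)) * Real.cos (2 * Real.pi * k * t) := by
      intro k hk; rw [abs_of_nonneg (by positivity)]
    rw [Finset.sum_congr rfl this]; simp
  · intro n; push_cast; rw [abs_neg]
    have : 2 * Real.pi * (-(n:ℝ)) * t = -(2 * Real.pi * n * t) := by ring
    rw [this, Real.cos_neg]

lemma fejer_zero (t : ℝ) : fejer 0 t = 1 := by simp [fejer_eq]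

lemma DD_zero (t : ℝ) : DD 0 t = 1 := by simp [DD]

lemma DD_succ (n : ℕ) (t : ℝ) :
    DD (n+1) t = DD n t + 2 * Real.cos (2 * Real.pi * (n+1) * t) := by
  unfold DD
  rw [Finset.sum_Icc_succ_top (by omega)]
  push_cast; ring

lemma fejer_lin (m : ℕ) (t : ℝ) :
    ((m:ℝ)+1) * fejer m t = ((m:ℝ)+1) + 2 * ∑ k ∈ Finset.Icc 1 m,
      (((m:ℝ)+1) - k) * Real.cos (2 * Real.pi * k * t) := by
  have hm : ((m:ℝ)+1) ≠ 0 := by positivity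
  rw [fejer_eq, mul_add, mul_one]
  congr 1
  rw [show ((m:ℝ)+1) * (2 * ∑ k ∈ Finset.Icc 1 m,
      (1 - (k:ℝ)/(m+1)) * Real.cos (2 * Real.pi * k * t))
    = 2 * ∑ k ∈ Finset.Icc 1 m, ((m:ℝ)+1) *
      ((1 - (k:ℝ)/(m+1)) * Real.cos (2 * Real.pi * k * t)) by rw [mul_left_comm, Finset.mul_sum]]
  congr 1
  apply Finset.sum_congr rfl
  intro k _
  field_simp

lemma fejer_succ (j : ℕ) (t : ℝ) :
    ((j:ℝ)+2) * fejer (j+1) t = ((j:ℝ)+1) * fejer j t + DD (j+1) t := by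
  have h1 := fejer_lin (j+1) t
  have h2 := fejer_lin j t
  push_cast at h1
  rw [Finset.sum_Icc_succ_top (a := 1) (b := j) (by omega)] at h1
  have h3 : ∑ k ∈ Finset.Icc 1 j, (((j:ℝ)+1+1) - k) * Real.cos (2 * Real.pi * k * t)
      = ∑ k ∈ Finset.Icc 1 j, ((((j:ℝ)+1) - k) * Real.cos (2 * Real.pi * k * t)
        + Real.cos (2 * Real.pi * k * t)) := by
    apply Finset.sum_congr rfl; intro k _; ring
  rw [h3, Finset.sum_add_distrib] at h1
  unfold DD
  push_cast
  rw [show ((j:ℝ)+2) = ((j:ℝ)+1+1) by ring, h1, h2]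
  rw [Finset.sum_Icc_succ_top (a := 1) (b := j) (by omega)]
  push_cast
  ring

/-- The key Abel-summation identity for the partial Fourier sum. -/
lemma key_identity (a : ℕ → ℝ) (M : ℕ) (t : ℝ) :
    a 0 + 2 * ∑ n ∈ Finset.Icc 1 (M+1), a n * Real.cos (2 * Real.pi * n * t)
      = ∑ j ∈ Finset.range M, ((j:ℝ)+1) * (a j - 2 * a (j+1) + a (j+2)) * fejer j t
        + ((M:ℝ)+1) * (a M - a (M+1)) * fejer M t + a (M+1) * DD (M+1) t := by
  induction M with
  | zero =>
    simp only [Finset.range_zero, Finset.sum_empty, Nat.cast_zero]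
    rw [fejer_zero, DD_succ, DD_zero]
    have : Finset.Icc 1 1 = {1} := rfl
    rw [this, Finset.sum_singleton]
    push_cast; ring
  | succ M ih =>
    rw [Finset.sum_Icc_succ_top (a := 1) (b := M+1) (by omega), Finset.sum_range_succ]
    have hDD := DD_succ (M+1) t
    have hF := fejer_succ M t
    simp only [show M+1+1 = M+2 by omega] at hDD ⊢
    push_cast at hDD hF ⊢
    rw [show 2 * Real.pi * ((M:ℝ) + 1 + 1) * t = 2 * Real.pi * ((M:ℝ) + 2) * t by ring] at hDD
    linear_combination ih - a (M+2) * hDD + (a (M+2) - a (M+1)) * hF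

lemma sin_mul_DD (n : ℕ) (t : ℝ) :
    Real.sin (Real.pi * t) * DD n t = Real.sin ((2*(n:ℝ)+1) * Real.pi * t) := by
  induction n with
  | zero => rw [DD_zero]; norm_num
  | succ n ih =>
    rw [DD_succ, mul_add, ih]
    have h2 : 2 * Real.sin (Real.pi * t) * Real.cos (2 * Real.pi * ((n:ℝ)+1) * t)
        = Real.sin ((2*((n:ℝ)+1)+1) * Real.pi * t) - Real.sin ((2*(n:ℝ)+1) * Real.pi * t) := by
      rw [show (2*((n:ℝ)+1)+1) * Real.pi * t = Real.pi * t + 2 * Real.pi * ((n:ℝ)+1) * t by ring,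
        show (2*(n:ℝ)+1) * Real.pi * t = 2 * Real.pi * ((n:ℝ)+1) * t - Real.pi * t by ring,
        Real.sin_add, Real.sin_sub]
      ring
    have harg : 2 * Real.pi * (((n:ℕ)+1:ℕ):ℝ) * t = 2 * Real.pi * ((n:ℝ)+1) * t := by
      push_cast; ring
    push_cast
    linarith [h2]

lemma sin_sq_mul_fejer (j : ℕ) (t : ℝ) :
    ((j:ℝ)+1) * fejer j t * Real.sin (Real.pi * t)^2 = Real.sin (((j:ℝ)+1) * Real.pi * t)^2 := by
  induction j with
  | zero => rw [fejer_zero]; norm_num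
  | succ j ih =>
    have hs := fejer_succ j t
    have hD := sin_mul_DD (j+1) t
    push_cast at hs hD ⊢
    have key : Real.sin (Real.pi * t) * Real.sin ((2*((j:ℝ)+1)+1) * Real.pi * t)
        = Real.sin (((j:ℝ)+1+1) * Real.pi * t)^2 - Real.sin (((j:ℝ)+1) * Real.pi * t)^2 := by
      have e1 : ∀ A B : ℝ, Real.sin A * Real.sin B = (Real.cos (A-B) - Real.cos (A+B))/2 := by
        intro A B; rw [Real.cos_sub, Real.cos_add]; ring
      have e2 : ∀ C : ℝ, Real.sin C ^ 2 = (1 - Real.cos (2*C))/2 := by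
        intro C; rw [Real.cos_two_mul, Real.sin_sq]; ring
      rw [e1, e2, e2]
      rw [show Real.pi * t - (2*((j:ℝ)+1)+1) * Real.pi * t = -(2*(((j:ℝ)+1) * Real.pi * t)) by ring,
        Real.cos_neg,
        show Real.pi * t + (2*((j:ℝ)+1)+1) * Real.pi * t = 2*(((j:ℝ)+1+1) * Real.pi * t) by ring]
      ring
    -- goal: (j+2) * fejer (j+1) t * sin^2 = sin((j+2)πt)^2
    linear_combination Real.sin (Real.pi * t)^2 * hs + ih + Real.sin (Real.pi * t) * hD + key

lemma fejer_nonneg (j : ℕ) (t : ℝ) : 0 ≤ fejer j t := by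
  by_cases hs : Real.sin (Real.pi * t) = 0
  · obtain ⟨n, hn⟩ := Real.sin_eq_zero_iff.1 hs
    have ht : t = n := by
      have h' : Real.pi * t = Real.pi * n := by linarith [hn]
      exact (mul_left_cancel₀ Real.pi_ne_zero h')
    unfold fejer
    apply Finset.sum_nonneg
    intro m hm
    simp only [Finset.mem_Icc] at hm
    have h1 : (0:ℝ) ≤ 1 - |(m : ℝ)| / (j + 1) := by
      rw [sub_nonneg, div_le_one (by positivity)]
      have e : |(m:ℝ)| = ((|m| : ℤ) : ℝ) := by simp
      rw [e]
      have hm' : |m| ≤ (j:ℤ) := abs_le.2 ⟨hm.1, hm.2⟩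
      calc ((|m| : ℤ) : ℝ) ≤ ((j:ℤ):ℝ) := by exact_mod_cast hm'
        _ ≤ (j:ℝ)+1 := by push_cast; linarith
    have h2 : Real.cos (2 * Real.pi * m * t) = 1 := by
      rw [ht, show 2 * Real.pi * (m:ℝ) * (n:ℝ) = ((m*n : ℤ):ℝ) * (2*Real.pi) by push_cast; ring]
      exact Real.cos_int_mul_two_pi (m*n)
    rw [h2, mul_one]; exact h1
  · have h := sin_sq_mul_fejer j t
    have hs2 : 0 < Real.sin (Real.pi * t)^2 := by positivity
    by_contra hneg
    push_neg at hneg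
    nlinarith [mul_pos (show (0:ℝ) < (j:ℝ)+1 by positivity) hs2,
      sq_nonneg (Real.sin (((j:ℝ)+1) * Real.pi * t))]

lemma fejer_le (j : ℕ) (t : ℝ) (hs : Real.sin (Real.pi * t) ≠ 0) :
    fejer j t ≤ 1 / (((j:ℝ)+1) * Real.sin (Real.pi * t)^2) := by
  have h := sin_sq_mul_fejer j t
  have hs2 : 0 < Real.sin (Real.pi * t)^2 := by positivity
  rw [le_div_iff₀ (by positivity)]
  nlinarith [Real.sin_sq_le_one (((j:ℝ)+1) * Real.pi * t)]

lemma abs_DD_le_lin (n : ℕ) (t : ℝ) : |DD n t| ≤ 2*(n:ℝ)+1 := by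
  have hsum : |∑ k ∈ Finset.Icc 1 n, Real.cos (2 * Real.pi * k * t)| ≤ (n:ℝ) := by
    calc |∑ k ∈ Finset.Icc 1 n, Real.cos (2 * Real.pi * k * t)|
        ≤ ∑ k ∈ Finset.Icc 1 n, |Real.cos (2 * Real.pi * k * t)| :=
          Finset.abs_sum_le_sum_abs _ _
      _ ≤ ∑ k ∈ Finset.Icc 1 n, (1:ℝ) :=
          Finset.sum_le_sum (fun k _ => Real.abs_cos_le_one _)
      _ = (n:ℝ) := by simp [Nat.card_Icc]
  unfold DD
  have h1 := abs_add_le (1:ℝ) (2 * ∑ k ∈ Finset.Icc 1 n, Real.cos (2 * Real.pi * k * t))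
  rw [abs_one, abs_mul, abs_two] at h1
  linarith

lemma abs_sin_pi_ge (t : ℝ) (h1 : |t| ≤ 1/2) : 2 * |t| ≤ |Real.sin (Real.pi * t)| := by
  have h0 : (0:ℝ) ≤ |t| := abs_nonneg t
  have hnn : 0 ≤ Real.sin (Real.pi * |t|) := by
    apply Real.sin_nonneg_of_nonneg_of_le_pi
    · positivity
    · nlinarith [Real.pi_pos]
  have habs : |Real.sin (Real.pi * t)| = Real.sin (Real.pi * |t|) := by
    rcases abs_cases t with ⟨he, _⟩ | ⟨he, _⟩
    · rw [he, abs_of_nonneg (by rw [← he]; exact hnn)]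
    · have e : Real.sin (Real.pi * t) = - Real.sin (Real.pi * |t|) := by
        rw [he, show Real.pi * -t = -(Real.pi * t) by ring, Real.sin_neg]; ring
      rw [e, abs_neg, abs_of_nonneg hnn]
  rw [habs]
  have h2 := Real.mul_le_sin (x := Real.pi * |t|) (by positivity)
    (by nlinarith [Real.pi_pos])
  calc 2 * |t| = 2 / Real.pi * (Real.pi * |t|) := by field_simp
    _ ≤ Real.sin (Real.pi * |t|) := h2

lemma abs_DD_le_inv (n : ℕ) (t : ℝ) (h0 : t ≠ 0) (h1 : |t| ≤ 1/2) :
    |DD n t| ≤ 1 / (2 * |t|) := by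
  have ht : 0 < |t| := abs_pos.2 h0
  have hsin := abs_sin_pi_ge t h1
  have hD := sin_mul_DD n t
  have h2 : |Real.sin (Real.pi * t)| * |DD n t| ≤ 1 := by
    rw [← abs_mul, hD]; exact Real.abs_sin_le_one _
  have h3 : 2 * |t| * |DD n t| ≤ 1 :=
    le_trans (by nlinarith [abs_nonneg (DD n t)]) h2
  rw [le_div_iff₀ (by positivity)]
  linarith

lemma DD_continuous (n : ℕ) : Continuous (DD n) := by
  unfold DD; fun_prop

lemma fejer_continuous (j : ℕ) : Continuous (fejer j) := by
  unfold fejer; fun_prop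

lemma integral_cos_int (n : ℤ) (hn : n ≠ 0) :
    ∫ t in (-(1/2):ℝ)..(1/2), Real.cos (2 * Real.pi * n * t) = 0 := by
  have hc : (2 * Real.pi * n) ≠ 0 := by
    simp [Real.pi_ne_zero, hn]
  have key := intervalIntegral.mul_integral_comp_mul_left (a := (-(1/2):ℝ)) (b := (1/2:ℝ))
    (c := 2 * Real.pi * n) (f := Real.cos)
  rw [integral_cos] at key
  have h1 : Real.sin (2 * Real.pi * n * (1/2)) = 0 := by
    rw [show 2 * Real.pi * n * (1/2) = (n:ℝ) * Real.pi by ring]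
    exact Real.sin_int_mul_pi n
  have h2 : Real.sin (2 * Real.pi * n * (-(1/2))) = 0 := by
    rw [show 2 * Real.pi * n * (-(1/2)) = ((-n:ℤ):ℝ) * Real.pi by push_cast; ring]
    exact Real.sin_int_mul_pi (-n)
  rw [h1, h2] at key
  rw [sub_zero] at key
  exact (mul_eq_zero.1 key).resolve_left hc

lemma setIntegral_Icc_eq_interval (f : ℝ → ℝ) :
    ∫ t in Set.Icc (-(1/2):ℝ) (1/2), f t = ∫ t in (-(1/2):ℝ)..(1/2), f t := by
  rw [MeasureTheory.integral_Icc_eq_integral_Ioc,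
    intervalIntegral.integral_of_le (by norm_num : (-(1/2):ℝ) ≤ 1/2)]

lemma integral_fejer (j : ℕ) : ∫ t in Set.Icc (-(1/2):ℝ) (1/2), fejer j t = 1 := by
  have hint : ∀ n : ℤ, IntegrableOn
      (fun t => (1 - |(n : ℝ)| / (j + 1)) * Real.cos (2 * Real.pi * n * t))
      (Set.Icc (-(1/2):ℝ) (1/2)) := by
    intro n
    apply Continuous.integrableOn_Icc
    fun_prop
  have : ∫ t in Set.Icc (-(1/2):ℝ) (1/2), fejer j t
      = ∑ n ∈ Finset.Icc (-(j:ℤ)) (j:ℤ), ∫ t in Set.Icc (-(1/2):ℝ) (1/2),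
        (1 - |(n : ℝ)| / (j + 1)) * Real.cos (2 * Real.pi * n * t) := by
    unfold fejer
    exact MeasureTheory.integral_finset_sum _ (fun n _ => hint n)
  rw [this]
  rw [Finset.sum_eq_single (0:ℤ)]
  · simp only [Int.cast_zero, abs_zero, zero_div, sub_zero, mul_zero, zero_mul, Real.cos_zero,
      one_mul, mul_one]
    simp [Real.volume_Icc]
    norm_num
  · intro n _ hn
    rw [MeasureTheory.integral_const_mul, setIntegral_Icc_eq_interval, integral_cos_int n hn,
      mul_zero]
  · intro h
    exfalso
    apply h
    simp [Finset.mem_Icc]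

lemma integral_abs_DD_le (n : ℕ) :
    ∫ t in Set.Icc (-(1/2):ℝ) (1/2), |DD n t| ≤ 2 + Real.log (2*(n:ℝ)+1) := by
  set c : ℝ := 2*(n:ℝ)+1 with hc
  have hc1 : (1:ℝ) ≤ c := by rw [hc]; have : (0:ℝ) ≤ (n:ℝ) := Nat.cast_nonneg n; linarith
  have hc0 : (0:ℝ) < c := by linarith
  set δ : ℝ := 1/(2*c) with hδdef
  have hδ0 : 0 < δ := by rw [hδdef]; positivity
  have hδhalf : δ ≤ 1/2 := by
    rw [hδdef, div_le_div_iff₀ (by positivity) (by norm_num)]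
    linarith
  have habs : Continuous fun t => |DD n t| := (DD_continuous n).abs
  have hInt : ∀ a b : ℝ, IntervalIntegrable (fun t => |DD n t|) volume a b :=
    fun a b => habs.intervalIntegrable a b
  -- splitting
  have e2 : (∫ t in (-δ)..δ, |DD n t|) + ∫ t in δ..(1/2:ℝ), |DD n t|
      = ∫ t in (-δ)..(1/2:ℝ), |DD n t| :=
    intervalIntegral.integral_add_adjacent_intervals (hInt _ _) (hInt _ _)
  have e1 : (∫ t in (-(1/2):ℝ)..(-δ), |DD n t|) + ∫ t in (-δ)..(1/2:ℝ), |DD n t|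
      = ∫ t in (-(1/2):ℝ)..(1/2:ℝ), |DD n t| :=
    intervalIntegral.integral_add_adjacent_intervals (hInt _ _) (hInt _ _)
  -- middle piece
  have hmid : ∫ t in (-δ)..δ, |DD n t| ≤ 1 := by
    have h1 : ∫ t in (-δ)..δ, |DD n t| ≤ ∫ _ in (-δ)..δ, c :=
      intervalIntegral.integral_mono_on (by linarith) (hInt _ _)
        intervalIntegrable_const (fun x _ => abs_DD_le_lin n x)
    rw [intervalIntegral.integral_const, smul_eq_mul] at h1
    calc ∫ t in (-δ)..δ, |DD n t| ≤ (δ - (-δ)) * c := h1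
      _ = 1 := by rw [hδdef]; field_simp; norm_num
  -- right piece
  have hgcont : ContinuousOn (fun t : ℝ => 1/2 * (1/t)) (Set.uIcc δ (1/2:ℝ)) := by
    apply ContinuousOn.mul continuousOn_const
    apply ContinuousOn.div continuousOn_const continuousOn_id
    intro x hx
    rw [Set.uIcc_of_le hδhalf] at hx
    exact ne_of_gt (lt_of_lt_of_le hδ0 hx.1)
  have hright : ∫ t in δ..(1/2:ℝ), |DD n t| ≤ 1/2 * Real.log c := by
    have h1 : ∫ t in δ..(1/2:ℝ), |DD n t| ≤ ∫ t in δ..(1/2:ℝ), 1/2 * (1/t) := by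
      apply intervalIntegral.integral_mono_on hδhalf (hInt _ _)
        (hgcont.intervalIntegrable)
      intro x hx
      have hx0 : 0 < x := lt_of_lt_of_le hδ0 hx.1
      have := abs_DD_le_inv n x (ne_of_gt hx0) (by rw [abs_of_pos hx0]; exact hx.2)
      rw [abs_of_pos hx0] at this
      calc |DD n x| ≤ 1/(2*x) := this
        _ = 1/2 * (1/x) := by ring
    rw [intervalIntegral.integral_const_mul, integral_one_div
      (by intro h; rw [Set.uIcc_of_le hδhalf] at h; exact absurd h.1 (by linarith [hδ0]))] at h1
    calc ∫ t in δ..(1/2:ℝ), |DD n t| ≤ 1/2 * Real.log ((1/2)/δ) := h1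
      _ = 1/2 * Real.log c := by
          congr 1
          rw [hδdef]
          congr 1
          field_simp
  -- left piece
  have hgcont' : ContinuousOn (fun t : ℝ => -(1/2 * (1/t))) (Set.uIcc (-(1/2):ℝ) (-δ)) := by
    apply ContinuousOn.neg
    apply ContinuousOn.mul continuousOn_const
    apply ContinuousOn.div continuousOn_const continuousOn_id
    intro x hx
    rw [Set.uIcc_of_le (by linarith)] at hx
    have hx2 : x ≤ -δ := hx.2
    simp only [id_eq]
    exact ne_of_lt (by linarith)
  have hleft : ∫ t in (-(1/2):ℝ)..(-δ), |DD n t| ≤ 1/2 * Real.log c := by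
    have h1 : ∫ t in (-(1/2):ℝ)..(-δ), |DD n t| ≤ ∫ t in (-(1/2):ℝ)..(-δ), -(1/2 * (1/t)) := by
      apply intervalIntegral.integral_mono_on (by linarith) (hInt _ _)
        (hgcont'.intervalIntegrable)
      intro x hx
      have hx0 : x < 0 := lt_of_le_of_lt hx.2 (by linarith)
      have hxabs : |x| = -x := abs_of_neg hx0
      have := abs_DD_le_inv n x (ne_of_lt hx0) (by rw [hxabs]; linarith [hx.1])
      rw [hxabs] at this
      calc |DD n x| ≤ 1/(2*(-x)) := this
        _ = -(1/2 * (1/x)) := by field_simp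
    have h2 : ∫ t in (-(1/2):ℝ)..(-δ), -(1/2 * (1/t))
        = -(1/2 * Real.log ((-δ)/(-(1/2)))) := by
      rw [intervalIntegral.integral_neg, intervalIntegral.integral_const_mul, integral_one_div
        (by intro h; rw [Set.uIcc_of_le (by linarith : (-(1/2):ℝ) ≤ -δ)] at h
            exact absurd h.2 (by simp; linarith [hδ0]))]
    rw [h2] at h1
    have h3 : Real.log ((-δ)/(-(1/2))) = - Real.log c := by
      rw [show ((-δ):ℝ)/(-(1/2)) = 2*δ by ring, hδdef, show 2*(1/(2*c)) = c⁻¹ by field_simp,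
        Real.log_inv]
    rw [h3] at h1
    linarith
  have hlog0 : 0 ≤ Real.log c := Real.log_nonneg hc1
  rw [setIntegral_Icc_eq_interval, ← e1, ← e2]
  linarith

lemma tsum_eq_toReal_tsum_ofReal (u : ℕ → ℝ) (h0 : ∀ j, 0 ≤ u j) :
    ∑' j, u j = (∑' j, ENNReal.ofReal (u j)).toReal := by
  by_cases hs : Summable u
  · rw [← ENNReal.ofReal_tsum_of_nonneg h0 hs, ENNReal.toReal_ofReal (tsum_nonneg h0)]
  · rw [tsum_eq_zero_of_not_summable hs]
    have : ∑' j, ENNReal.ofReal (u j) = ⊤ := by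
      by_contra h
      apply hs
      have := ENNReal.summable_toReal h
      convert this using 1
      funext j
      rw [ENNReal.toReal_ofReal (h0 j)]
    rw [this, ENNReal.toReal_top]

/-- Key helper: integrability of a pointwise `tsum` of nonnegative functions,
together with the value of its integral. -/
lemma integrable_tsum_nonneg {μ : Measure ℝ} {u : ℕ → ℝ → ℝ}
    (hm : ∀ j, Measurable (u j)) (h0 : ∀ j x, 0 ≤ u j x)
    (hint : ∀ j, Integrable (u j) μ)
    (hsum : Summable fun j => ∫ x, u j x ∂μ) :
    Integrable (fun x => ∑' j, u j x) μ ∧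
      ∫ x, ∑' j, u j x ∂μ = ∑' j, ∫ x, u j x ∂μ := by
  have hrepr : ∀ x, ∑' j, u j x = (∑' j, ENNReal.ofReal (u j x)).toReal :=
    fun x => tsum_eq_toReal_tsum_ofReal (fun j => u j x) (fun j => h0 j x)
  have hmeas : Measurable (fun x => ∑' j, u j x) := by
    have : Measurable (fun x => (∑' j, ENNReal.ofReal (u j x)).toReal) :=
      (Measurable.ennreal_tsum (fun j => (hm j).ennreal_ofReal)).ennreal_toReal
    simpa only [← hrepr] using this
  have hlint : ∀ j, ∫⁻ x, ENNReal.ofReal (u j x) ∂μ = ENNReal.ofReal (∫ x, u j x ∂μ) :=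
    fun j => (MeasureTheory.ofReal_integral_eq_lintegral_ofReal (hint j)
      (Filter.Eventually.of_forall (h0 j))).symm
  have hlsum : ∫⁻ x, ∑' j, ENNReal.ofReal (u j x) ∂μ = ENNReal.ofReal (∑' j, ∫ x, u j x ∂μ) := by
    rw [MeasureTheory.lintegral_tsum (fun j => ((hm j).ennreal_ofReal).aemeasurable)]
    rw [ENNReal.ofReal_tsum_of_nonneg (fun j => MeasureTheory.integral_nonneg (h0 j)) hsum]
    exact tsum_congr hlint
  have hfin : ∫⁻ x, ∑' j, ENNReal.ofReal (u j x) ∂μ ≠ ⊤ := by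
    rw [hlsum]; exact ENNReal.ofReal_ne_top
  have hintg : Integrable (fun x => ∑' j, u j x) μ := by
    refine ⟨hmeas.aestronglyMeasurable, ?_⟩
    rw [MeasureTheory.hasFiniteIntegral_iff_norm]
    have hb : ∀ x, ENNReal.ofReal ‖∑' j, u j x‖ ≤ ∑' j, ENNReal.ofReal (u j x) := by
      intro x
      rw [Real.norm_of_nonneg (tsum_nonneg (fun j => h0 j x)), hrepr x]
      exact ENNReal.ofReal_toReal_le
    exact lt_of_le_of_lt (MeasureTheory.lintegral_mono hb) (lt_top_iff_ne_top.2 hfin)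
  refine ⟨hintg, ?_⟩
  apply MeasureTheory.integral_tsum (fun j => (hm j).aestronglyMeasurable)
  rw [show (fun i => ∫⁻ a, ‖u i a‖ₑ ∂μ) = fun i => ∫⁻ a, ENNReal.ofReal (u i a) ∂μ by
    funext i; congr 1; funext a; rw [← Real.enorm_eq_ofReal (h0 i a)]]
  rw [tsum_congr hlint, ← ENNReal.ofReal_tsum_of_nonneg
    (fun j => MeasureTheory.integral_nonneg (h0 j)) hsum]
  exact ENNReal.ofReal_ne_top

section Seq
variable (a : ℕ → ℝ)
  (hpos : ∀ n, 0 < a n)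
  (hconv : ∀ n, 0 ≤ a n - 2 * a (n + 1) + a (n + 2))
  (hdec : Antitone a)
  (hlog : Filter.Tendsto (fun n : ℕ => a n * Real.log n) Filter.atTop (nhds 0))

local notation "b" => fun j => a j - a (j+1)
local notation "v" => fun j => ((j:ℝ)+1) * (a j - 2 * a (j+1) + a (j+2))

include hdec in
lemma b_nonneg : ∀ j, 0 ≤ a j - a (j+1) := fun j => by
  have := hdec (Nat.le_succ j); linarith

include hconv in
lemma b_antitone : ∀ j, a (j+1) - a (j+2) ≤ a j - a (j+1) := fun j => by
  have := hconv j; linarith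

include hdec hpos in
lemma sum_b_le : ∀ M, ∑ j ∈ Finset.range M, (a j - a (j+1)) ≤ a 0 := by
  intro M
  rw [Finset.sum_range_sub' (fun j => a j)]
  have := hpos M
  linarith

include hdec hpos in
lemma b_summable : Summable (fun j => a j - a (j+1)) :=
  summable_of_sum_range_le (fun j => b_nonneg a hdec j) (sum_b_le a hpos hdec)

lemma abel_identity : ∀ M, ∑ j ∈ Finset.range M, ((j:ℝ)+1) * (a j - 2 * a (j+1) + a (j+2))
    = (∑ j ∈ Finset.range M, (a j - a (j+1))) - M * (a M - a (M+1)) := by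
  intro M
  induction M with
  | zero => simp
  | succ M ih =>
    rw [Finset.sum_range_succ, ih, Finset.sum_range_succ (f := fun j => a j - a (j+1))]
    push_cast
    ring

include hconv hdec hpos in
lemma v_summable : Summable (fun (j:ℕ) => ((j:ℝ)+1) * (a j - 2 * a (j+1) + a (j+2))) := by
  apply summable_of_sum_range_le (c := a 0)
  · intro j
    have := hconv j
    positivity
  · intro M
    rw [abel_identity a M]
    have h1 := sum_b_le a hpos hdec M
    have h2 : 0 ≤ (M:ℝ) * (a M - a (M+1)) := by
      have := b_nonneg a hdec M
      positivity
    linarith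

include hpos hdec in
lemma a_tendsto_zero (hlog : Filter.Tendsto (fun n : ℕ => a n * Real.log n)
    Filter.atTop (nhds 0)) : Filter.Tendsto a Filter.atTop (nhds 0) := by
  have hbdd : BddBelow (Set.range a) := ⟨0, fun x ⟨n, hn⟩ => hn ▸ (hpos n).le⟩
  have hlim := tendsto_atTop_ciInf hdec hbdd
  set L := ⨅ i, a i with hL
  have hL0 : 0 ≤ L := le_ciInf (fun n => (hpos n).le)
  rcases eq_or_lt_of_le hL0 with h | h
  · rwa [← h] at hlim
  · exfalso
    -- a n * log n ≥ L * log n → ∞, contradicting hlog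
    have hev : ∀ᶠ n : ℕ in Filter.atTop, L * Real.log n ≤ a n * Real.log n := by
      filter_upwards [Filter.eventually_ge_atTop 1] with n hn
      have h1 : L ≤ a n := ciInf_le hbdd n
      have h2 : 0 ≤ Real.log n := Real.log_nonneg (by exact_mod_cast hn)
      nlinarith
    have hinf : Filter.Tendsto (fun n : ℕ => L * Real.log n) Filter.atTop Filter.atTop := by
      apply Filter.Tendsto.const_mul_atTop h
      exact Real.tendsto_log_atTop.comp tendsto_natCast_atTop_atTop
    have := Filter.tendsto_atTop_mono' Filter.atTop hev hinf
    -- now a n * log n → ∞ and → 0, contradiction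
    have hb := hlog.eventually (eventually_lt_nhds (show (0:ℝ) < 1 by norm_num))
    have ha := this.eventually (Filter.eventually_ge_atTop (1:ℝ))
    rcases (ha.and hb).exists with ⟨n, h1, h2⟩
    linarith

include hconv hdec hpos in
lemma nb_tendsto_zero : Filter.Tendsto (fun M : ℕ => (M:ℝ) * (a M - a (M+1)))
    Filter.atTop (nhds 0) := by
  have hb := b_summable a hpos hdec
  have hv := v_summable a hpos hconv hdec
  have h1 : Filter.Tendsto (fun M : ℕ => ∑ j ∈ Finset.range M, (a j - a (j+1)))
      Filter.atTop (nhds (∑' j, (a j - a (j+1)))) := hb.hasSum.tendsto_sum_nat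
  have h2 : Filter.Tendsto
      (fun M : ℕ => ∑ j ∈ Finset.range M, ((j:ℝ)+1) * (a j - 2 * a (j+1) + a (j+2)))
      Filter.atTop (nhds (∑' (j:ℕ), ((j:ℝ)+1) * (a j - 2 * a (j+1) + a (j+2)))) :=
    hv.hasSum.tendsto_sum_nat
  set c : ℝ := (∑' j, (a j - a (j+1))) - ∑' (j:ℕ), ((j:ℝ)+1) * (a j - 2 * a (j+1) + a (j+2)) with hcdef
  have h3 : Filter.Tendsto (fun M : ℕ => (M:ℝ) * (a M - a (M+1))) Filter.atTop (nhds c) := by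
    have : (fun M : ℕ => (M:ℝ) * (a M - a (M+1)))
        = fun M => (∑ j ∈ Finset.range M, (a j - a (j+1)))
          - ∑ j ∈ Finset.range M, ((j:ℝ)+1) * (a j - 2 * a (j+1) + a (j+2)) := by
      funext M
      rw [abel_identity a M]
      ring
    rw [this, hcdef]
    exact h1.sub h2
  have hc0 : 0 ≤ c := by
    apply le_of_tendsto_of_tendsto' tendsto_const_nhds h3
    intro M
    have := b_nonneg a hdec M
    positivity
  rcases eq_or_lt_of_le hc0 with h | h
  · rwa [← h] at h3
  · exfalso
    have hev : ∀ᶠ M : ℕ in Filter.atTop, c/2 < (M:ℝ) * (a M - a (M+1)) :=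
      h3.eventually (eventually_gt_nhds (by linarith))
    rcases Filter.eventually_atTop.1 hev with ⟨M₀, hM₀⟩
    have hcomp : ∀ M : ℕ, c/2 * (1/((M + (M₀+1) : ℕ):ℝ))
        ≤ a (M + (M₀+1)) - a (M + (M₀+1) + 1) := by
      intro M
      have hge := hM₀ (M + (M₀+1)) (by omega)
      have hpos' : (0:ℝ) < ((M + (M₀+1) : ℕ):ℝ) := by
        have h' : (0:ℕ) < M + (M₀+1) := by omega
        exact_mod_cast h'
      rw [mul_one_div, div_le_iff₀ hpos']
      linarith [hge]
    have hb' : Summable (fun M : ℕ => a (M + (M₀+1)) - a (M + (M₀+1) + 1)) :=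
      (summable_nat_add_iff (f := fun j => a j - a (j+1)) (M₀+1)).2 hb
    have hsum1 : Summable (fun M : ℕ => c/2 * (1/((M + (M₀+1) : ℕ):ℝ))) :=
      Summable.of_nonneg_of_le (fun M => by positivity) hcomp hb'
    have hsum2 : Summable (fun M : ℕ => 1/((M + (M₀+1) : ℕ):ℝ)) := by
      have h2 := hsum1.mul_left (2/c)
      have he : (fun M : ℕ => (2/c) * (c/2 * (1/((M + (M₀+1) : ℕ):ℝ))))
          = fun M : ℕ => 1/((M + (M₀+1) : ℕ):ℝ) := by
        funext M; field_simp
      rwa [he] at h2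
    have hsum3 : Summable (fun n : ℕ => 1/((n:ℕ):ℝ)) :=
      (summable_nat_add_iff (f := fun n : ℕ => 1/((n:ℕ):ℝ)) (M₀+1)).1 hsum2
    exact Real.not_summable_one_div_natCast hsum3
end Seq

theorem stmt_9 (a : ℕ → ℝ)
    (hpos : ∀ n, 0 < a n)
    (hconv : ∀ n, 0 ≤ a n - 2 * a (n + 1) + a (n + 2))
    (hdec : Antitone a)
    (hlog : Filter.Tendsto (fun n : ℕ => a n * Real.log n) Filter.atTop (nhds 0))
    (f : ℝ → ℝ)
    (hf : ∀ t, f t = ∑' j : ℕ, (j + 1 : ℝ) * (a j - 2 * a (j + 1) + a (j + 2)) * fejer j t)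
    -- the `N`th symmetric Fourier partial sum of `f`, whose Fourier coefficients are `a_{|n|}`
    (S : ℕ → ℝ → ℝ)
    (hS : ∀ N t, S N t = a 0 + 2 * ∑ n ∈ Finset.Icc 1 N, a n * Real.cos (2 * Real.pi * n * t)) :
    Filter.Tendsto
      (fun N : ℕ => ∫ t in Set.Icc (-(1/2) : ℝ) (1/2), |f t - S N t|)
      Filter.atTop (nhds 0) := by
  set μ : Measure ℝ := volume.restrict (Set.Icc (-(1/2):ℝ) (1/2)) with hμ
  set v : ℕ → ℝ := fun j => ((j:ℝ)+1) * (a j - 2 * a (j+1) + a (j+2)) with hv_def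
  set u : ℕ → ℝ → ℝ := fun j t => ((j:ℝ)+1) * (a j - 2 * a (j+1) + a (j+2)) * fejer j t
    with hu_def
  have hvnn : ∀ j, 0 ≤ v j := fun j => by
    have := hconv j
    simp only [hv_def]
    positivity
  have hv : Summable v := v_summable a hpos hconv hdec
  have hunn : ∀ j t, 0 ≤ u j t := fun j t =>
    mul_nonneg (hvnn j) (fejer_nonneg j t)
  have hum : ∀ j, Measurable (u j) := fun j =>
    (continuous_const.mul (fejer_continuous j)).measurable
  have huint : ∀ j, Integrable (u j) μ := fun j =>
    ((continuous_const.mul (fejer_continuous j)).integrableOn_Icc)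
  have huI : ∀ j, ∫ t, u j t ∂μ = v j := by
    intro j
    simp only [hu_def, hμ]
    rw [MeasureTheory.integral_const_mul]
    rw [show ∫ t in Set.Icc (-(1/2):ℝ) (1/2), fejer j t = 1 from integral_fejer j]
    simp [hv_def]
  -- the tail functions
  set W : ℕ → ℝ → ℝ := fun M t => ∑' j, u (j + M) t with hW_def
  have hWfact : ∀ M, Integrable (W M) μ ∧ ∫ t, W M t ∂μ = ∑' j, v (j + M) := by
    intro M
    have h := integrable_tsum_nonneg (μ := μ) (u := fun j => u (j + M))
      (fun j => hum _) (fun j t => hunn _ t) (fun j => huint _)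
      (by
        have : (fun j => ∫ x, u (j + M) x ∂μ) = fun j => v (j + M) := by
          funext j; exact huI _
        rw [this]
        exact (summable_nat_add_iff (f := v) M).2 hv)
    refine ⟨h.1, ?_⟩
    rw [h.2]
    exact tsum_congr (fun j => huI _)
  -- pointwise bound a.e.
  have hptwise : ∀ M : ℕ, ∀ t, t ∈ Set.Icc (-(1/2):ℝ) (1/2) → t ≠ 0 →
      |f t - S (M+1) t| ≤ W M t + ((M:ℝ)+1) * (a M - a (M+1)) * fejer M t
        + a (M+1) * |DD (M+1) t| := by
    intro M t ht ht0
    have hsin : Real.sin (Real.pi * t) ≠ 0 := by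
      intro hs
      obtain ⟨n, hn⟩ := Real.sin_eq_zero_iff.1 hs
      have htn : t = n := mul_left_cancel₀ Real.pi_ne_zero (by linarith [hn])
      have h1 : |(n:ℝ)| ≤ 1/2 := by
        rw [← htn, abs_le]; exact ⟨ht.1, ht.2⟩
      have h2 : n ≠ 0 := by
        intro h; apply ht0; rw [htn, h]; simp
      have h3 : (1:ℝ) ≤ |(n:ℝ)| := by
        have : (1:ℤ) ≤ |n| := Int.one_le_abs h2
        calc (1:ℝ) ≤ ((|n|:ℤ):ℝ) := by exact_mod_cast this
          _ = |(n:ℝ)| := by simp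
      linarith
    have hsumm : Summable (fun j => u j t) := by
      have hs2 : 0 < Real.sin (Real.pi * t)^2 := by positivity
      refine Summable.of_nonneg_of_le (fun j => hunn j t) (fun j => ?_)
        (hv.mul_right (1 / Real.sin (Real.pi * t)^2))
      have h2 : fejer j t ≤ 1 / Real.sin (Real.pi * t)^2 := by
        apply (fejer_le j t hsin).trans
        apply one_div_le_one_div_of_le hs2
        nlinarith [hs2, Nat.cast_nonneg (α := ℝ) j]
      simp only [hu_def, hv_def]
      have hc : 0 ≤ ((j:ℝ)+1) * (a j - 2 * a (j+1) + a (j+2)) := by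
        have := hconv j; positivity
      exact mul_le_mul_of_nonneg_left h2 hc
    have hft : f t = (∑ j ∈ Finset.range M, u j t) + W M t := by
      rw [hf t, hW_def]
      exact (Summable.sum_add_tsum_nat_add M hsumm).symm
    have hSt : S (M+1) t = (∑ j ∈ Finset.range M, u j t)
        + ((M:ℝ)+1) * (a M - a (M+1)) * fejer M t + a (M+1) * DD (M+1) t := by
      rw [hS, key_identity a M t]
    rw [hft, hSt]
    have hWnn : 0 ≤ W M t := tsum_nonneg (fun j => hunn _ t)
    have hterm2 : 0 ≤ ((M:ℝ)+1) * (a M - a (M+1)) * fejer M t := by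
      have h1 := b_nonneg a hdec M
      have h2 := fejer_nonneg M t
      positivity
    calc |(∑ j ∈ Finset.range M, u j t) + W M t
        - ((∑ j ∈ Finset.range M, u j t) + ((M:ℝ)+1) * (a M - a (M+1)) * fejer M t
          + a (M+1) * DD (M+1) t)|
        = |W M t - ((M:ℝ)+1) * (a M - a (M+1)) * fejer M t - a (M+1) * DD (M+1) t| := by
          congr 1; ring
      _ ≤ |W M t - ((M:ℝ)+1) * (a M - a (M+1)) * fejer M t| + |a (M+1) * DD (M+1) t| :=
          abs_sub _ _
      _ ≤ |W M t| + |((M:ℝ)+1) * (a M - a (M+1)) * fejer M t| + |a (M+1) * DD (M+1) t| := by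
          linarith [abs_sub (W M t) (((M:ℝ)+1) * (a M - a (M+1)) * fejer M t)]
      _ = W M t + ((M:ℝ)+1) * (a M - a (M+1)) * fejer M t + a (M+1) * |DD (M+1) t| := by
          rw [abs_of_nonneg hWnn, abs_of_nonneg hterm2, abs_mul,
            abs_of_nonneg (hpos (M+1)).le]
  -- the integral bound
  have hbound : ∀ M : ℕ, ∫ t in Set.Icc (-(1/2):ℝ) (1/2), |f t - S (M+1) t|
      ≤ (∑' j, v (j + M)) + ((M:ℝ)+1) * (a M - a (M+1))
        + a (M+1) * (2 + Real.log (2*((M+1:ℕ):ℝ)+1)) := by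
    intro M
    set G : ℝ → ℝ := fun t => W M t + ((M:ℝ)+1) * (a M - a (M+1)) * fejer M t
      + a (M+1) * |DD (M+1) t| with hG_def
    have hGint : Integrable G μ := by
      apply Integrable.add
      apply Integrable.add
      · exact (hWfact M).1
      · exact (continuous_const.mul (fejer_continuous M)).integrableOn_Icc
      · exact (continuous_const.mul ((DD_continuous (M+1)).abs)).integrableOn_Icc
    have h0ne : ∀ᵐ (t : ℝ) ∂volume, t ≠ 0 := by
      rw [MeasureTheory.ae_iff]
      simp only [ne_eq, not_not]
      rw [show {a : ℝ | a = 0} = {0} from Set.setOf_eq_eq_singleton]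
      exact MeasureTheory.measure_singleton 0
    have hae : (fun t => |f t - S (M+1) t|) ≤ᵐ[μ] G := by
      rw [hμ]
      filter_upwards [MeasureTheory.ae_restrict_mem measurableSet_Icc,
        MeasureTheory.ae_restrict_of_ae h0ne] with t ht ht0
      exact hptwise M t ht ht0
    have h1 : ∫ t, |f t - S (M+1) t| ∂μ ≤ ∫ t, G t ∂μ :=
      MeasureTheory.integral_mono_of_nonneg
        (Filter.Eventually.of_forall (fun t => abs_nonneg _)) hGint hae
    have h2 : ∫ t, G t ∂μ ≤ (∑' j, v (j + M)) + ((M:ℝ)+1) * (a M - a (M+1))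
        + a (M+1) * (2 + Real.log (2*((M+1:ℕ):ℝ)+1)) := by
      have hintW : Integrable (W M) μ := (hWfact M).1
      have hint2 : Integrable (fun t => ((M:ℝ)+1) * (a M - a (M+1)) * fejer M t) μ :=
        (continuous_const.mul (fejer_continuous M)).integrableOn_Icc
      have hint3 : Integrable (fun t => a (M+1) * |DD (M+1) t|) μ :=
        (continuous_const.mul ((DD_continuous (M+1)).abs)).integrableOn_Icc
      have hint1 : Integrable (fun t => W M t
          + ((M:ℝ)+1) * (a M - a (M+1)) * fejer M t) μ := hintW.add hint2
      rw [show (∫ t, G t ∂μ) = ∫ t, (W M t + ((M:ℝ)+1) * (a M - a (M+1)) * fejer M t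
        + a (M+1) * |DD (M+1) t|) ∂μ from rfl]
      rw [MeasureTheory.integral_add hint1 hint3, MeasureTheory.integral_add hintW hint2]
      rw [(hWfact M).2]
      rw [MeasureTheory.integral_const_mul, MeasureTheory.integral_const_mul]
      have e1 : ∫ t, fejer M t ∂μ = 1 := integral_fejer M
      have e2 : ∫ t, |DD (M+1) t| ∂μ ≤ 2 + Real.log (2*((M+1:ℕ):ℝ)+1) :=
        integral_abs_DD_le (M+1)
      rw [e1, mul_one]
      have e3 : a (M+1) * ∫ t, |DD (M+1) t| ∂μ
          ≤ a (M+1) * (2 + Real.log (2*((M+1:ℕ):ℝ)+1)) :=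
        mul_le_mul_of_nonneg_left e2 (hpos (M+1)).le
      linarith
    exact le_trans h1 h2
  -- limits of the three pieces
  have hT1 : Filter.Tendsto (fun M : ℕ => ∑' j, v (j + M)) Filter.atTop (nhds 0) := by
    have he : (fun M : ℕ => ∑' j, v (j + M))
        = fun M => (∑' j, v j) - ∑ j ∈ Finset.range M, v j := by
      funext M
      have := Summable.sum_add_tsum_nat_add M hv
      linarith
    rw [he]
    have := hv.hasSum.tendsto_sum_nat
    have h2 := Filter.Tendsto.sub (tendsto_const_nhds (x := ∑' j, v j)) this
    simpa using h2
  have hT2 : Filter.Tendsto (fun M : ℕ => ((M:ℝ)+1) * (a M - a (M+1)))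
      Filter.atTop (nhds 0) := by
    have h1 := nb_tendsto_zero a hpos hconv hdec
    have h2 : Filter.Tendsto (fun M : ℕ => a M - a (M+1)) Filter.atTop (nhds 0) :=
      (b_summable a hpos hdec).tendsto_atTop_zero
    have := h1.add h2
    rw [add_zero] at this
    have he : (fun M : ℕ => ((M:ℝ)+1) * (a M - a (M+1)))
        = fun M : ℕ => (M:ℝ) * (a M - a (M+1)) + (a M - a (M+1)) := by
      funext M; ring
    rw [he]
    exact this
  have hT3 : Filter.Tendsto (fun M : ℕ => a (M+1) * (2 + Real.log (2*((M+1:ℕ):ℝ)+1)))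
      Filter.atTop (nhds 0) := by
    have ha0 : Filter.Tendsto (fun M : ℕ => a (M+1)) Filter.atTop (nhds 0) :=
      (a_tendsto_zero a hpos hdec hlog).comp (Filter.tendsto_add_atTop_nat 1)
    have halog : Filter.Tendsto (fun M : ℕ => a (M+1) * Real.log ((M+1:ℕ):ℝ))
        Filter.atTop (nhds 0) := hlog.comp (Filter.tendsto_add_atTop_nat 1)
    have hupper : Filter.Tendsto
        (fun M : ℕ => (2 + Real.log 3) * a (M+1) + a (M+1) * Real.log ((M+1:ℕ):ℝ))
        Filter.atTop (nhds 0) := by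
      have := (ha0.const_mul (2 + Real.log 3)).add halog
      simpa using this
    apply tendsto_of_tendsto_of_tendsto_of_le_of_le tendsto_const_nhds hupper
    · intro M
      show 0 ≤ a (M+1) * (2 + Real.log (2*((M+1:ℕ):ℝ)+1))
      have h1 : (1:ℝ) ≤ 2*((M+1:ℕ):ℝ)+1 := by
        have : (0:ℝ) ≤ ((M+1:ℕ):ℝ) := Nat.cast_nonneg _
        linarith
      have h2 : 0 ≤ Real.log (2*((M+1:ℕ):ℝ)+1) := Real.log_nonneg h1
      have := (hpos (M+1)).le
      positivity
    · intro M
      show a (M+1) * (2 + Real.log (2*((M+1:ℕ):ℝ)+1))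
        ≤ (2 + Real.log 3) * a (M+1) + a (M+1) * Real.log ((M+1:ℕ):ℝ)
      have hM1 : (1:ℝ) ≤ ((M+1:ℕ):ℝ) := by exact_mod_cast Nat.one_le_iff_ne_zero.2 (by omega)
      have hlogle : Real.log (2*((M+1:ℕ):ℝ)+1) ≤ Real.log 3 + Real.log ((M+1:ℕ):ℝ) := by
        rw [← Real.log_mul (by norm_num) (by linarith)]
        apply Real.log_le_log (by linarith)
        linarith
      have ha := (hpos (M+1)).le
      nlinarith [hlogle, ha]
  -- combine
  have hB : Filter.Tendsto
      (fun M : ℕ => (∑' j, v (j + M)) + ((M:ℝ)+1) * (a M - a (M+1))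
        + a (M+1) * (2 + Real.log (2*((M+1:ℕ):ℝ)+1))) Filter.atTop (nhds 0) := by
    have := (hT1.add hT2).add hT3
    simpa using this
  rw [show (0:ℝ) = 0 from rfl, ← Filter.tendsto_add_atTop_iff_nat 1]
  apply tendsto_of_tendsto_of_tendsto_of_le_of_le tendsto_const_nhds hB
  · intro M
    exact MeasureTheory.integral_nonneg (fun t => abs_nonneg _)
  · intro M
    exact hbound M
end

section
/- (Vitali–Hahn–Saks type lemma) Let $(X,\mathfrak{M},\mu)$ be a finite positive measure space, and let $f_n \in L^1(\mu)$ be such that $\lim_{n\to\infty} \int_E f_n\,d\mu$ exists for every $E \in \mathfrak{M}$. Then the family $\{f_n\}$ is uniformly integrable: for every $\varepsilon > 0$ there exists $\delta > 0$ such that $\mu(A) < \delta$ implies $\sup_n |\int_A f_n\,d\mu| < \varepsilon$ (equivalently $\sup_n \int_A |f_n|\,d\mu < \varepsilon$). -/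
open MeasureTheory Filter Topology Set ENNReal symmDiff

namespace VHS
variable {X : Type*} [MeasurableSpace X] {μ : Measure X}

/-- absolute continuity of the integral, real form -/
lemma absCont (f : X → ℝ) (hf : Integrable f μ) {ε : ℝ} (hε : 0 < ε) :
    ∃ δ : ℝ, 0 < δ ∧ ∀ s : Set X, μ s < ENNReal.ofReal δ → (∫ x in s, |f x| ∂μ) < ε := by
  obtain ⟨δ, hδ0, hδ⟩ := exists_pos_setLIntegral_lt_of_measure_lt
    (f := fun x => (‖f x‖₊ : ℝ≥0∞)) hf.2.ne (ε := ENNReal.ofReal ε)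
    (by simpa using hε)
  refine ⟨(min δ 1).toReal, ?_, ?_⟩
  · simp only [ENNReal.toReal_pos_iff]
    exact ⟨lt_min hδ0 zero_lt_one, min_lt_of_right_lt (by norm_num)⟩
  · intro s hs
    have hsδ : μ s < δ := lt_of_lt_of_le hs (by
      rw [ENNReal.ofReal_toReal (by simp)]; exact min_le_left _ _)
    have h1 := hδ s hsδ
    have h2 : (∫ x in s, |f x| ∂μ) = (∫⁻ x in s, ‖f x‖₊ ∂μ).toReal := by
      simp_rw [← enorm_eq_nnnorm]
      rw [← integral_norm_eq_lintegral_enorm (hf.1.restrict)]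
      simp [Real.norm_eq_abs]
    rw [h2]
    exact ENNReal.toReal_lt_of_lt_ofReal h1


/-- the set of indicator functions in L¹ -/
def indSet (μ : Measure X) : Set (Lp ℝ 1 μ) :=
  {g | ∃ E : Set X, MeasurableSet E ∧ (g : X → ℝ) =ᵐ[μ] E.indicator 1}

lemma mem_indSet_of_ae {g : Lp ℝ 1 μ} (h : ∀ᵐ x ∂μ, (g : X → ℝ) x = 0 ∨ (g : X → ℝ) x = 1) :
    g ∈ indSet μ := by
  refine ⟨{x | (g : X → ℝ) x = 1}, ?_, ?_⟩
  · exact (Lp.stronglyMeasurable g).measurable (measurableSet_singleton 1)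
  · filter_upwards [h] with x hx
    rcases hx with h0 | h1
    · have : x ∉ {x | (g : X → ℝ) x = 1} := by simp [Set.mem_setOf_eq, h0]
      simp [Set.indicator_of_notMem this, h0]
    · have : x ∈ {x | (g : X → ℝ) x = 1} := h1
      simp [Set.indicator_of_mem this, h1]

lemma isClosed_indSet : IsClosed (indSet μ) := by
  have : Fact ((1:ℝ≥0∞) ≤ 1) := ⟨le_refl _⟩
  set_option synthInstance.maxHeartbeats 800000 in
  refine IsSeqClosed.isClosed ?_
  intro gs g hgs hconv
  have hTM : TendstoInMeasure μ (fun k => (gs k : X → ℝ)) atTop g :=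
    tendstoInMeasure_of_tendsto_Lp hconv
  obtain ⟨ns, _, hae⟩ := hTM.exists_seq_tendsto_ae
  refine mem_indSet_of_ae ?_
  have hvals : ∀ᵐ x ∂μ, ∀ k, (gs (ns k) : X → ℝ) x = 0 ∨ (gs (ns k) : X → ℝ) x = 1 := by
    rw [ae_all_iff]
    intro k
    obtain ⟨E, hE, hEae⟩ := hgs (ns k)
    filter_upwards [hEae] with x hx
    rw [hx]
    by_cases hxE : x ∈ E <;> simp [Set.indicator, hxE]
  filter_upwards [hae, hvals] with x hx hv
  have : (g : X → ℝ) x ∈ ({0, 1} : Set ℝ) := by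
    have hcl : IsClosed ({0, 1} : Set ℝ) := (Set.toFinite _).isClosed
    exact hcl.mem_of_tendsto hx (Filter.Eventually.of_forall fun k => by
      rcases hv k with h | h <;> simp [h])
  simpa using this


lemma indSet_vals {g : Lp ℝ 1 μ} (hg : g ∈ indSet μ) :
    ∀ᵐ x ∂μ, (g : X → ℝ) x = 0 ∨ (g : X → ℝ) x = 1 := by
  obtain ⟨E, _, hEae⟩ := hg
  filter_upwards [hEae] with x hx
  rw [hx]; by_cases hxE : x ∈ E <;> simp [Set.indicator, hxE]

lemma measure_ne_le {g g' : Lp ℝ 1 μ} (hg : g ∈ indSet μ) (hg' : g' ∈ indSet μ) :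
    μ {x | (g : X → ℝ) x ≠ (g' : X → ℝ) x} ≤ ENNReal.ofReal (dist g g') := by
  set D := {x | (g : X → ℝ) x ≠ (g' : X → ℝ) x} with hD
  have hDm : MeasurableSet D := by
    have h1 := (Lp.stronglyMeasurable g).measurable
    have h2 := (Lp.stronglyMeasurable g').measurable
    exact (MeasurableSet.compl (measurableSet_eq_fun h1 h2))
  have key : μ D ≤ ∫⁻ x, ‖(g : X → ℝ) x - (g' : X → ℝ) x‖₊ ∂μ := by
    rw [← lintegral_indicator_one hDm]
    refine lintegral_mono_ae ?_
    filter_upwards [indSet_vals hg, indSet_vals hg'] with x hx hx'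
    by_cases hxD : x ∈ D
    · rw [Set.indicator_of_mem hxD]
      have : |(g : X → ℝ) x - (g' : X → ℝ) x| = 1 := by
        have hne : (g : X → ℝ) x ≠ (g' : X → ℝ) x := hxD
        rcases hx with h | h <;> rcases hx' with h' | h' <;>
          rw [h, h'] at hne ⊢ <;> norm_num at hne <;> norm_num
      have h2 : ‖(g : X → ℝ) x - (g' : X → ℝ) x‖₊ = 1 := by
        ext; simp [nnnorm, Real.norm_eq_abs, this]
      rw [h2]; simp
    · rw [Set.indicator_of_notMem hxD]; exact zero_le
  have heq : (∫⁻ x, ‖(g : X → ℝ) x - (g' : X → ℝ) x‖₊ ∂μ) = ENNReal.ofReal (dist g g') := by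
    have h1 : dist g g' = (eLpNorm ((g : X → ℝ) - (g' : X → ℝ)) 1 μ).toReal := by
      rw [Lp.dist_def]
    have h2 : eLpNorm ((g : X → ℝ) - (g' : X → ℝ)) 1 μ ≠ ∞ := by
      rw [← eLpNorm_congr_ae (Lp.coeFn_sub g g')]
      exact (Lp.eLpNorm_lt_top _).ne
    rw [h1, ENNReal.ofReal_toReal h2, eLpNorm_one_eq_lintegral_enorm]
    exact lintegral_congr fun x => by simp [Pi.sub_apply, enorm_eq_nnnorm]
  rw [← heq]; exact key

lemma continuous_phi {f : X → ℝ} (hf : Integrable f μ) :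
    Continuous (fun g : ↥(indSet μ) => ∫ x, ((g : Lp ℝ 1 μ) : X → ℝ) x * f x ∂μ) := by
  rw [Metric.continuous_iff]
  rintro ⟨g', hg'⟩ ε hε
  obtain ⟨δ, hδ0, hδ⟩ := exists_pos_setLIntegral_lt_of_measure_lt
    (f := fun x => (‖f x‖₊ : ℝ≥0∞)) hf.2.ne (ε := ENNReal.ofReal ε) (by simpa using hε)
  obtain ⟨r, hr0, hrδ⟩ : ∃ r : ℝ, 0 < r ∧ ENNReal.ofReal r ≤ δ := by
    refine ⟨(min δ 1).toReal, ?_, ?_⟩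
    · simp only [ENNReal.toReal_pos_iff]
      exact ⟨lt_min hδ0 zero_lt_one, min_lt_of_right_lt (by norm_num)⟩
    · rw [ENNReal.ofReal_toReal (by simp)]; exact min_le_left _ _
  refine ⟨r, hr0, ?_⟩
  rintro ⟨g, hg⟩ hdist
  simp only [Subtype.dist_eq] at hdist
  set D := {x | (g : X → ℝ) x ≠ (g' : X → ℝ) x} with hDdef
  have hDm : MeasurableSet D :=
    (MeasurableSet.compl (measurableSet_eq_fun (Lp.stronglyMeasurable g).measurable
      (Lp.stronglyMeasurable g').measurable))
  have hμD : μ D < δ := by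
    calc μ D ≤ ENNReal.ofReal (dist g g') := measure_ne_le hg hg'
    _ < ENNReal.ofReal r := by exact (ENNReal.ofReal_lt_ofReal_iff hr0).mpr hdist
    _ ≤ δ := hrδ
  have hint1 : Integrable (fun x => ((g : Lp ℝ 1 μ) : X → ℝ) x * f x) μ := by
    refine hf.mono ((Lp.aestronglyMeasurable g).mul hf.1) ?_
    filter_upwards [indSet_vals hg] with x hx
    rcases hx with h | h <;> simp [norm_mul, h, abs_nonneg]
  have hint2 : Integrable (fun x => ((g' : Lp ℝ 1 μ) : X → ℝ) x * f x) μ := by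
    refine hf.mono ((Lp.aestronglyMeasurable g').mul hf.1) ?_
    filter_upwards [indSet_vals hg'] with x hx
    rcases hx with h | h <;> simp [norm_mul, h, abs_nonneg]
  rw [Real.dist_eq, ← integral_sub hint1 hint2, ← Real.norm_eq_abs]
  have hbound : ‖∫ x, (((g : Lp ℝ 1 μ) : X → ℝ) x * f x - ((g' : Lp ℝ 1 μ) : X → ℝ) x * f x) ∂μ‖
      ≤ ∫ x in D, |f x| ∂μ := by
    calc ‖∫ x, (((g : Lp ℝ 1 μ) : X → ℝ) x * f x - ((g' : Lp ℝ 1 μ) : X → ℝ) x * f x) ∂μ‖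
        ≤ ∫ x, ‖((g : Lp ℝ 1 μ) : X → ℝ) x * f x - ((g' : Lp ℝ 1 μ) : X → ℝ) x * f x‖ ∂μ :=
          norm_integral_le_integral_norm _
      _ ≤ ∫ x, D.indicator (fun y => |f y|) x ∂μ := by
          refine integral_mono_ae (hint1.sub hint2).norm ((hf.norm.indicator hDm)) ?_
          filter_upwards [indSet_vals hg, indSet_vals hg'] with x hx hx'
          by_cases hxD : x ∈ D
          · rw [Set.indicator_of_mem hxD]
            rw [← sub_mul, Real.norm_eq_abs, abs_mul]
            have : |(g : X → ℝ) x - (g' : X → ℝ) x| ≤ 1 := by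
              rcases hx with h | h <;> rcases hx' with h' | h' <;> simp [h, h']
            calc |(g : X → ℝ) x - (g' : X → ℝ) x| * |f x| ≤ 1 * |f x| :=
                mul_le_mul_of_nonneg_right this (abs_nonneg _)
              _ = |f x| := one_mul _
          · have : (g : X → ℝ) x = (g' : X → ℝ) x := by
              by_contra hne; exact hxD hne
            rw [Set.indicator_of_notMem hxD, this]
            simp
      _ = ∫ x in D, |f x| ∂μ := integral_indicator hDm
  refine lt_of_le_of_lt hbound ?_
  have h1 := hδ D hμD
  have h2 : (∫ x in D, |f x| ∂μ) = (∫⁻ x in D, ‖f x‖₊ ∂μ).toReal := by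
    simp_rw [← enorm_eq_nnnorm]
    rw [← integral_norm_eq_lintegral_enorm (hf.1.restrict)]
    simp [Real.norm_eq_abs]
  rw [h2]
  exact ENNReal.toReal_lt_of_lt_ofReal h1


noncomputable def phi (f : X → ℝ) (g : Lp ℝ 1 μ) : ℝ := ∫ x, (g : X → ℝ) x * f x ∂μ

lemma continuous_phi' {f : X → ℝ} (hf : Integrable f μ) :
    Continuous (fun g : ↥(indSet μ) => phi f (g : Lp ℝ 1 μ)) := continuous_phi hf

lemma phi_indicator [IsFiniteMeasure μ] (f : X → ℝ) {E : Set X} (hE : MeasurableSet E) :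
    phi f (indicatorConstLp 1 hE (measure_ne_top μ E) (1 : ℝ)) = ∫ x in E, f x ∂μ := by
  rw [phi, ← integral_indicator hE]
  refine integral_congr_ae ?_
  filter_upwards [indicatorConstLp_coeFn (p := 1) (hs := hE) (hμs := measure_ne_top μ E)
    (c := (1:ℝ))] with x hx
  rw [hx]
  by_cases hxE : x ∈ E <;> simp [Set.indicator, hxE]

lemma phi_ae (f : X → ℝ) {g : Lp ℝ 1 μ} {E : Set X} (hE : MeasurableSet E)
    (hae : (g : X → ℝ) =ᵐ[μ] E.indicator 1) : phi f g = ∫ x in E, f x ∂μ := by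
  rw [phi, ← integral_indicator hE]
  refine integral_congr_ae ?_
  filter_upwards [hae] with x hx
  rw [hx]
  by_cases hxE : x ∈ E <;> simp [Set.indicator, hxE]

lemma zero_mem_indSet : (0 : Lp ℝ 1 μ) ∈ indSet μ := by
  refine ⟨∅, MeasurableSet.empty, ?_⟩
  filter_upwards [Lp.coeFn_zero ℝ 1 μ] with x hx
  simpa using hx

lemma finAbsCont (f : ℕ → X → ℝ) (hint : ∀ n, Integrable (f n) μ) (N : ℕ) {ε : ℝ}
    (hε : 0 < ε) : ∃ δ : ℝ, 0 < δ ∧ ∀ k ≤ N, ∀ s : Set X, μ s < ENNReal.ofReal δ →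
      (∫ x in s, |f k x| ∂μ) < ε := by
  induction N with
  | zero =>
    obtain ⟨δ, hδ0, hδ⟩ := absCont (f 0) (hint 0) hε
    exact ⟨δ, hδ0, fun k hk s hs => by simpa [Nat.le_zero.mp hk] using hδ s hs⟩
  | succ n ih =>
    obtain ⟨δ₁, hδ₁0, hδ₁⟩ := ih
    obtain ⟨δ₂, hδ₂0, hδ₂⟩ := absCont (f (n + 1)) (hint (n + 1)) hε
    refine ⟨min δ₁ δ₂, lt_min hδ₁0 hδ₂0, fun k hk s hs => ?_⟩
    rcases Nat.lt_succ_iff_lt_or_eq.mp (Nat.lt_succ_of_le hk) with h | h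
    · exact hδ₁ k (Nat.lt_succ_iff.mp h) s
        (hs.trans_le (ENNReal.ofReal_le_ofReal (min_le_left _ _)))
    · subst h
      exact hδ₂ s (hs.trans_le (ENNReal.ofReal_le_ofReal (min_le_right _ _)))

lemma dist_indicator_lt [IsFiniteMeasure μ] {E₀ B : Set X} (hE₀ : MeasurableSet E₀)
    (hB : MeasurableSet B) {r : ℝ} (hμ : μ (E₀ ∆ B) < ENNReal.ofReal r) :
    dist (indicatorConstLp 1 hB (measure_ne_top μ B) (1 : ℝ))
      (indicatorConstLp 1 hE₀ (measure_ne_top μ E₀) (1 : ℝ)) < r := by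
  rw [Lp.dist_def]
  have h1 : eLpNorm (((indicatorConstLp 1 hB (measure_ne_top μ B) (1 : ℝ)) : X → ℝ) -
      ((indicatorConstLp 1 hE₀ (measure_ne_top μ E₀) (1 : ℝ)) : X → ℝ)) 1 μ ≤ μ (E₀ ∆ B) := by
    rw [eLpNorm_one_eq_lintegral_enorm]
    have : (∫⁻ x, ‖(((indicatorConstLp 1 hB (measure_ne_top μ B) (1 : ℝ)) : X → ℝ) -
        ((indicatorConstLp 1 hE₀ (measure_ne_top μ E₀) (1 : ℝ)) : X → ℝ)) x‖₊ ∂μ)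
        ≤ ∫⁻ x, (E₀ ∆ B).indicator (1 : X → ℝ≥0∞) x ∂μ := by
      refine lintegral_mono_ae ?_
      filter_upwards [indicatorConstLp_coeFn (p := 1) (hs := hB) (hμs := measure_ne_top μ B)
        (c := (1:ℝ)), indicatorConstLp_coeFn (p := 1) (hs := hE₀)
        (hμs := measure_ne_top μ E₀) (c := (1:ℝ))] with x hx hx'
      simp only [Pi.sub_apply, hx, hx']
      by_cases h1 : x ∈ B <;> by_cases h2 : x ∈ E₀ <;>
        simp [Set.indicator, h1, h2, Set.mem_symmDiff]
    rw [lintegral_indicator_one (hE₀.symmDiff hB)] at this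
    exact this
  have h2 := lt_of_le_of_lt h1 hμ
  exact ENNReal.toReal_lt_of_lt_ofReal h2

set_option synthInstance.maxHeartbeats 1000000 in
set_option maxHeartbeats 1000000 in
lemma signedVHS (μ : Measure X) [IsFiniteMeasure μ] (f : ℕ → X → ℝ)
    (hint : ∀ n, Integrable (f n) μ)
    (hlim : ∀ E : Set X, MeasurableSet E →
      ∃ L : ℝ, Tendsto (fun n => ∫ x in E, f n x ∂μ) atTop (nhds L)) :
    ∀ η : ℝ, 0 < η → ∃ δ : ℝ, 0 < δ ∧
      ∀ A : Set X, MeasurableSet A → μ A < ENNReal.ofReal δ →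
        ∀ n, |∫ x in A, f n x ∂μ| < η := by
  intro η hη
  set η3 := η / 3 with hη3def
  have hη3 : 0 < η3 := by positivity
  haveI : Nonempty ↥(indSet μ) := ⟨⟨0, zero_mem_indSet⟩⟩
  haveI : CompleteSpace ↥(indSet μ) := isClosed_indSet.completeSpace_coe
  set F : ℕ → Set ↥(indSet μ) := fun N =>
    {g | ∀ m n : ℕ, |phi (f (N + m)) (g : Lp ℝ 1 μ) - phi (f (N + n)) (g : Lp ℝ 1 μ)| ≤ η3}
    with hFdef
  have hFclosed : ∀ N, IsClosed (F N) := by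
    intro N
    have : F N = ⋂ (m : ℕ) (n : ℕ),
        {g : ↥(indSet μ) | |phi (f (N + m)) (g : Lp ℝ 1 μ)
          - phi (f (N + n)) (g : Lp ℝ 1 μ)| ≤ η3} := by
      ext g; simp [hFdef]
    rw [this]
    refine isClosed_iInter fun m => isClosed_iInter fun n => ?_
    exact isClosed_le (((continuous_phi' (hint _)).sub (continuous_phi' (hint _))).abs)
      continuous_const
  have hcover : ⋃ N, F N = Set.univ := by
    rw [Set.eq_univ_iff_forall]
    intro g
    obtain ⟨E, hE, hae⟩ := g.2
    obtain ⟨L, hL⟩ := hlim E hE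
    have hC : CauchySeq fun n => ∫ x in E, f n x ∂μ := hL.cauchySeq
    obtain ⟨N, hN⟩ := Metric.cauchySeq_iff.mp hC η3 hη3
    refine Set.mem_iUnion.mpr ⟨N, fun m n => ?_⟩
    rw [phi_ae (f (N + m)) hE hae, phi_ae (f (N + n)) hE hae, ← Real.dist_eq]
    exact (hN _ (Nat.le_add_right N m) _ (Nat.le_add_right N n)).le
  obtain ⟨N, hNint⟩ := nonempty_interior_of_iUnion_of_closed hFclosed hcover
  obtain ⟨g₀, hg₀int⟩ := hNint
  obtain ⟨r, hr0, hball⟩ := Metric.isOpen_iff.mp isOpen_interior g₀ hg₀int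
  have hballF : Metric.ball g₀ r ⊆ F N := hball.trans interior_subset
  obtain ⟨E₀, hE₀, hg₀ae⟩ := g₀.2
  obtain ⟨δ₁, hδ₁0, hδ₁⟩ := finAbsCont f hint N hη3
  refine ⟨min δ₁ r, lt_min hδ₁0 hr0, fun A hA hμA n => ?_⟩
  have hμA₁ : μ A < ENNReal.ofReal δ₁ :=
    hμA.trans_le (ENNReal.ofReal_le_ofReal (min_le_left _ _))
  have hμAr : μ A < ENNReal.ofReal r :=
    hμA.trans_le (ENNReal.ofReal_le_ofReal (min_le_right _ _))
  have habs : ∀ k ≤ N, |∫ x in A, f k x ∂μ| < η3 := by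
    intro k hk
    refine lt_of_le_of_lt ?_ (hδ₁ k hk A hμA₁)
    calc |∫ x in A, f k x ∂μ| = ‖∫ x in A, f k x ∂μ‖ := (Real.norm_eq_abs _).symm
      _ ≤ ∫ x in A, ‖f k x‖ ∂μ := norm_integral_le_integral_norm _
      _ = ∫ x in A, |f k x| ∂μ := by simp [Real.norm_eq_abs]
  rcases le_or_gt n N with hn | hn
  · exact (habs n hn).trans_le (by rw [hη3def]; linarith)
  -- main case
  · set B₁ := E₀ ∪ A with hB₁def
    set B₂ := E₀ \ A with hB₂def
    have hB₁ : MeasurableSet B₁ := hE₀.union hA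
    have hB₂ : MeasurableSet B₂ := hE₀.diff hA
    have hsym₁ : μ (E₀ ∆ B₁) < ENNReal.ofReal r := by
      refine lt_of_le_of_lt (measure_mono ?_) hμAr
      intro x hx
      rcases Set.mem_symmDiff.mp hx with ⟨h1, h2⟩ | ⟨h1, h2⟩
      · exact absurd (Set.mem_union_left A h1) h2
      · rcases h1 with h1 | h1
        · exact absurd h1 h2
        · exact h1
    have hsym₂ : μ (E₀ ∆ B₂) < ENNReal.ofReal r := by
      refine lt_of_le_of_lt (measure_mono ?_) hμAr
      intro x hx
      rcases Set.mem_symmDiff.mp hx with ⟨h1, h2⟩ | ⟨h1, h2⟩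
      · by_contra hxA
        exact h2 ⟨h1, hxA⟩
      · exact absurd h1.1 h2
    -- the two indicator elements
    set G₁ : Lp ℝ 1 μ := indicatorConstLp 1 hB₁ (measure_ne_top μ B₁) (1 : ℝ) with hG₁def
    set G₂ : Lp ℝ 1 μ := indicatorConstLp 1 hB₂ (measure_ne_top μ B₂) (1 : ℝ) with hG₂def
    have hmem₁ : G₁ ∈ indSet μ := ⟨B₁, hB₁, indicatorConstLp_coeFn⟩
    have hmem₂ : G₂ ∈ indSet μ := ⟨B₂, hB₂, indicatorConstLp_coeFn⟩
    have hg₀Lp : (g₀ : Lp ℝ 1 μ) = indicatorConstLp 1 hE₀ (measure_ne_top μ E₀) (1 : ℝ) := by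
      refine Lp.ext (μ := μ) ?_
      exact hg₀ae.trans (indicatorConstLp_coeFn (p := 1)).symm
    have hdist₁ : (⟨G₁, hmem₁⟩ : ↥(indSet μ)) ∈ Metric.ball g₀ r := by
      rw [Metric.mem_ball, Subtype.dist_eq, hg₀Lp]
      exact dist_indicator_lt hE₀ hB₁ hsym₁
    have hdist₂ : (⟨G₂, hmem₂⟩ : ↥(indSet μ)) ∈ Metric.ball g₀ r := by
      rw [Metric.mem_ball, Subtype.dist_eq, hg₀Lp]
      exact dist_indicator_lt hE₀ hB₂ hsym₂
    have hF₁ := hballF hdist₁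
    have hF₂ := hballF hdist₂
    simp only [hFdef, Set.mem_setOf_eq] at hF₁ hF₂
    have hsplit : ∀ k, ∫ x in A, f k x ∂μ = phi (f k) G₁ - phi (f k) G₂ := by
      intro k
      rw [hG₁def, hG₂def, phi_indicator (f k) hB₁, phi_indicator (f k) hB₂]
      have hU : B₁ = B₂ ∪ A := by
        rw [hB₁def, hB₂def, Set.diff_union_self]
      rw [hU, setIntegral_union disjoint_sdiff_self_left hA
        (hint k).integrableOn (hint k).integrableOn]
      ring
    have hkey₁ : |phi (f n) G₁ - phi (f N) G₁| ≤ η3 := by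
      have := hF₁ (n - N) 0
      rwa [Nat.add_sub_cancel' hn.le, Nat.add_zero] at this
    have hkey₂ : |phi (f n) G₂ - phi (f N) G₂| ≤ η3 := by
      have := hF₂ (n - N) 0
      rwa [Nat.add_sub_cancel' hn.le, Nat.add_zero] at this
    have hNsmall := habs N le_rfl
    have : |∫ x in A, f n x ∂μ - ∫ x in A, f N x ∂μ| ≤ 2 * η3 := by
      rw [hsplit n, hsplit N]
      have : phi (f n) G₁ - phi (f n) G₂ - (phi (f N) G₁ - phi (f N) G₂)
          = (phi (f n) G₁ - phi (f N) G₁) - (phi (f n) G₂ - phi (f N) G₂) := by ring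
      rw [this]
      calc |(phi (f n) G₁ - phi (f N) G₁) - (phi (f n) G₂ - phi (f N) G₂)|
          ≤ |phi (f n) G₁ - phi (f N) G₁| + |phi (f n) G₂ - phi (f N) G₂| := abs_sub _ _
        _ ≤ 2 * η3 := by linarith
    calc |∫ x in A, f n x ∂μ|
        ≤ |∫ x in A, f n x ∂μ - ∫ x in A, f N x ∂μ| + |∫ x in A, f N x ∂μ| := by
          have := abs_sub_abs_le_abs_sub (∫ x in A, f n x ∂μ) (∫ x in A, f N x ∂μ)
          linarith [abs_nonneg (∫ x in A, f N x ∂μ)]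
      _ < 2 * η3 + η3 := by linarith
      _ = η := by rw [hη3def]; ring

end VHS

/-- Vitali–Hahn–Saks type lemma. -/
theorem stmt_14 {X : Type*} [MeasurableSpace X] (μ : MeasureTheory.Measure X)
    [MeasureTheory.IsFiniteMeasure μ] (f : ℕ → X → ℝ)
    (hint : ∀ n, MeasureTheory.Integrable (f n) μ)
    (hlim : ∀ E : Set X, MeasurableSet E →
      ∃ L : ℝ, Filter.Tendsto (fun n => ∫ x in E, f n x ∂μ) Filter.atTop (nhds L)) :
    ∀ ε : ℝ, 0 < ε → ∃ δ : ℝ, 0 < δ ∧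
      ∀ A : Set X, MeasurableSet A → μ A < ENNReal.ofReal δ →
        ∀ n, (∫ x in A, |f n x| ∂μ) < ε := by
  intro ε hε
  obtain ⟨δ, hδ0, hδ⟩ := VHS.signedVHS μ f hint hlim (ε / 2) (by positivity)
  refine ⟨δ, hδ0, fun A hA hμA n => ?_⟩
  obtain ⟨g, hgm, hfg⟩ : ∃ g, StronglyMeasurable g ∧ f n =ᵐ[μ] g :=
    ⟨(hint n).1.mk (f n), (hint n).1.stronglyMeasurable_mk, (hint n).1.ae_eq_mk⟩
  have hgint : Integrable g μ := (hint n).congr hfg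
  set P := g ⁻¹' Set.Ici 0 with hPdef
  have hPm : MeasurableSet P := hgm.measurable measurableSet_Ici
  have hd : Disjoint (A ∩ P) (A \ P) :=
    disjoint_sdiff_self_right.mono_left Set.inter_subset_right
  have hsplit : ∫ x in A, |f n x| ∂μ = (∫ x in A ∩ P, g x ∂μ) - ∫ x in A \ P, g x ∂μ := by
    have e1 : ∫ x in A, |f n x| ∂μ = ∫ x in A, |g x| ∂μ :=
      integral_congr_ae (ae_restrict_of_ae (hfg.mono fun x hx => by simp only []; rw [hx]))
    have e2 : ∫ x in A, |g x| ∂μ = (∫ x in A ∩ P, |g x| ∂μ) + ∫ x in A \ P, |g x| ∂μ := by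
      rw [← setIntegral_union hd (hA.diff hPm) hgint.abs.integrableOn hgint.abs.integrableOn,
        Set.inter_union_diff]
    have e3 : ∫ x in A ∩ P, |g x| ∂μ = ∫ x in A ∩ P, g x ∂μ :=
      setIntegral_congr_fun (hA.inter hPm) fun x hx => abs_of_nonneg hx.2
    have e4 : ∫ x in A \ P, |g x| ∂μ = - ∫ x in A \ P, g x ∂μ := by
      rw [← integral_neg]
      refine setIntegral_congr_fun (hA.diff hPm) fun x hx => ?_
      have hlt : g x < 0 := lt_of_not_ge hx.2
      rw [abs_of_neg hlt]
    rw [e1, e2, e3, e4]; ring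
  have hc1 : ∫ x in A ∩ P, g x ∂μ = ∫ x in A ∩ P, f n x ∂μ :=
    integral_congr_ae (ae_restrict_of_ae (hfg.mono fun x hx => hx.symm))
  have hc2 : ∫ x in A \ P, g x ∂μ = ∫ x in A \ P, f n x ∂μ :=
    integral_congr_ae (ae_restrict_of_ae (hfg.mono fun x hx => hx.symm))
  have h1 := hδ (A ∩ P) (hA.inter hPm)
    (lt_of_le_of_lt (measure_mono Set.inter_subset_left) hμA) n
  have h2 := hδ (A \ P) (hA.diff hPm)
    (lt_of_le_of_lt (measure_mono Set.diff_subset) hμA) n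
  rw [hsplit, hc1, hc2]
  have ha := le_abs_self (∫ x in A ∩ P, f n x ∂μ)
  have hb := neg_abs_le (∫ x in A \ P, f n x ∂μ)
  linarith
end

section
/- Let $f \in L^1[-1/2,1/2]$ with Fourier series $\sum_{n \ge 2}\frac{\cos(2\pi n t)}{\log n}$. Then the family of partial sums $\{S_N(f,\cdot)\}_{N \ge 1}$ is NOT uniformly integrable on $[-1/2,1/2]$ with Lebesgue measure. -/
open Real Set Finset Filter Topology MeasureTheory


lemma Gval (b c : ℝ) (hc : c ≠ 0) :
    ∫ t in (0:ℝ)..b, Real.sin (c * t) = (1 - Real.cos (c * b)) / c := by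
  rw [intervalIntegral.integral_comp_mul_left Real.sin hc]
  simp [integral_sin, Real.cos_zero, smul_eq_mul, div_eq_inv_mul]

lemma Gnonneg (b c : ℝ) (hc : 0 ≤ c) :
    0 ≤ ∫ t in (0:ℝ)..b, Real.sin (c * t) := by
  rcases eq_or_lt_of_le hc with h | h
  · simp [← h]
  · rw [Gval b c h.ne']
    have h1 := Real.cos_le_one (c * b)
    apply div_nonneg (by linarith) h.le

lemma prodsum (x y : ℝ) : Real.cos x * Real.sin y
    = (Real.sin (y + x) + Real.sin (y - x)) / 2 := by
  rw [Real.sin_add, Real.sin_sub]; ring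

lemma sinInt (c : ℝ) (b : ℝ) : IntervalIntegrable (fun t => Real.sin (c * t)) volume 0 b :=
  (Real.continuous_sin.comp (continuous_const.mul continuous_id)).intervalIntegrable _ _

lemma intval (n N : ℕ) (b : ℝ) :
    ∫ t in (0:ℝ)..b, Real.cos (2*π*n*t) * Real.sin (2*π*N*t)
    = ((∫ t in (0:ℝ)..b, Real.sin ((2*π*((N:ℝ)+n))*t))
       + (∫ t in (0:ℝ)..b, Real.sin ((2*π*((N:ℝ)-n))*t)))/2 := by
  have hfun : ∀ t : ℝ, Real.cos (2*π*n*t) * Real.sin (2*π*N*t)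
      = (Real.sin ((2*π*((N:ℝ)+n))*t) + Real.sin ((2*π*((N:ℝ)-n))*t))/2 := by
    intro t
    rw [prodsum]
    have e1 : 2*π*(N:ℝ)*t + 2*π*(n:ℝ)*t = (2*π*((N:ℝ)+n))*t := by ring
    have e2 : 2*π*(N:ℝ)*t - 2*π*(n:ℝ)*t = (2*π*((N:ℝ)-n))*t := by ring
    rw [e1, e2]
  rw [intervalIntegral.integral_congr (fun t _ => hfun t)]
  rw [intervalIntegral.integral_div, intervalIntegral.integral_add (sinInt _ _) (sinInt _ _)]


lemma split_Ioc {a K : ℕ} (g : ℕ → ℝ) :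
    ∑ k ∈ Finset.Ioc a (a + 2*K), g k
    = ∑ k ∈ Finset.Ioc a (a + K), (g k + g (k + K)) := by
  have h1 : Finset.Ioc a (a + 2*K) = Finset.Ioc a (a+K) ∪ Finset.Ioc (a+K) (a+2*K) := by
    rw [Finset.Ioc_union_Ioc_eq_Ioc (by omega) (by omega)]
  rw [h1, Finset.sum_union, Finset.sum_add_distrib]
  · congr 1
    have : Finset.Ioc (a+K) (a+2*K) = (Finset.Ioc a (a+K)).map (addRightEmbedding K) := by
      rw [Finset.map_add_right_Ioc]; congr 1; omega
    rw [this, Finset.sum_map]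
    rfl
  · rw [Finset.disjoint_left]
    intro x hx hy
    simp only [Finset.mem_Ioc] at hx hy
    omega

lemma block (K j : ℕ) (hK : 1 ≤ K) :
    1/(2*π*(j+1)) ≤ ∑ k ∈ Finset.Ioc (2*K*j) (2*K*j + 2*K),
      (1 - Real.cos (π * k / K))/(2*π*k) := by
  rw [split_Ioc]
  have hπ := Real.pi_pos
  have hKR : (0:ℝ) < K := by exact_mod_cast hK
  have key : ∀ k ∈ Finset.Ioc (2*K*j) (2*K*j + K),
      1/(2*π*K*(j+1)) ≤ (1 - Real.cos (π * k / K))/(2*π*k)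
        + (1 - Real.cos (π * (k + K : ℕ) / K))/(2*π*(k + K : ℕ)) := by
    intro k hk
    simp only [Finset.mem_Ioc] at hk
    have hkR : (0:ℝ) < k := by
      have : 0 < k := by omega
      exact_mod_cast this
    have hcast : ((k + K : ℕ) : ℝ) = (k:ℝ) + K := by push_cast; ring
    have hcos : Real.cos (π * (k + K : ℕ) / K) = - Real.cos (π * k / K) := by
      rw [hcast]
      have : π * ((k:ℝ) + K) / K = π * k / K + π := by field_simp
      rw [this, Real.cos_add_pi]
    rw [hcos, hcast]
    set c := Real.cos (π * k / K) with hc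
    have hc1 : -1 ≤ c := Real.neg_one_le_cos _
    have hc2 : c ≤ 1 := Real.cos_le_one _
    have hkK : (k:ℝ) + K ≤ 2*K*((j:ℝ)+1) := by
      have h2 : (k:ℝ) ≤ 2*K*j + K := by exact_mod_cast hk.2
      have h3 : 2*(K:ℝ)*((j:ℝ)+1) = 2*K*j + 2*K := by ring
      rw [h3]; linarith
    have h2 : (0:ℝ) < (k:ℝ) + K := by linarith
    have step1 : (1 - c)/(2*π*((k:ℝ)+K)) + (1 + (-(-c)))/(2*π*((k:ℝ)+K))
        ≤ (1 - c)/(2*π*k) + (1 - -c)/(2*π*((k:ℝ)+K)) := by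
      have : (1 - c)/(2*π*((k:ℝ)+K)) ≤ (1 - c)/(2*π*k) := by
        apply div_le_div_of_nonneg_left (by linarith) (by positivity)
        nlinarith
      simp only [neg_neg, sub_neg_eq_add]
      linarith
    have step2 : 1/(2*π*K*(j+1)) ≤ (1 - c)/(2*π*((k:ℝ)+K)) + (1+(-(-c)))/(2*π*((k:ℝ)+K)) := by
      have hsum : (1 - c)/(2*π*((k:ℝ)+K)) + (1+(-(-c)))/(2*π*((k:ℝ)+K))
          = 2/(2*π*((k:ℝ)+K)) := by
        simp only [neg_neg]; field_simp; ring
      rw [hsum]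
      rw [div_le_div_iff₀ (by positivity) (by positivity)]
      have : (0:ℝ) < (j:ℝ) + 1 := by positivity
      nlinarith
    calc 1/(2*π*K*(j+1)) ≤ _ := step2
      _ ≤ _ := step1
  calc 1/(2*π*(↑j+1)) = ∑ k ∈ Finset.Ioc (2*K*j) (2*K*j + K), 1/(2*π*K*(j+1)) := by
        rw [Finset.sum_const, Nat.card_Ioc]
        have : 2*K*j + K - 2*K*j = K := by omega
        rw [this]
        rw [nsmul_eq_mul]
        field_simp
    _ ≤ _ := Finset.sum_le_sum key

lemma cum (K : ℕ) (hK : 1 ≤ K) (J : ℕ) :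
    Real.log (J+1) / (2*π) ≤ ∑ k ∈ Finset.Ioc 0 (2*K*J),
      (1 - Real.cos (π * k / K))/(2*π*k) := by
  have hπ := Real.pi_pos
  induction J with
  | zero => simp
  | succ J ih =>
    have hsplit : Finset.Ioc 0 (2*K*(J+1))
        = Finset.Ioc 0 (2*K*J) ∪ Finset.Ioc (2*K*J) (2*K*J + 2*K) := by
      rw [Finset.Ioc_union_Ioc_eq_Ioc (by omega) (by omega), Nat.mul_succ]
    rw [hsplit, Finset.sum_union]
    · have hb := block K J hK
      have hlog : Real.log ((J:ℝ)+1+1) ≤ Real.log ((J:ℝ)+1) + 1/((J:ℝ)+1) := by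
        have h0 : (0:ℝ) < (J:ℝ)+1 := by positivity
        have h1 : Real.log ((J:ℝ)+1+1) - Real.log ((J:ℝ)+1)
            = Real.log (((J:ℝ)+1+1)/((J:ℝ)+1)) := by
          rw [Real.log_div (by linarith) (by linarith)]
        have h2 : Real.log (((J:ℝ)+1+1)/((J:ℝ)+1)) ≤ ((J:ℝ)+1+1)/((J:ℝ)+1) - 1 :=
          Real.log_le_sub_one_of_pos (by positivity)
        have h3 : ((J:ℝ)+1+1)/((J:ℝ)+1) - 1 = 1/((J:ℝ)+1) := by field_simp; ring
        linarith
      have h4 : Real.log ((J:ℝ)+1+1)/(2*π) ≤ (Real.log ((J:ℝ)+1) + 1/((J:ℝ)+1))/(2*π) := by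
        gcongr
      have h5 : (Real.log ((J:ℝ)+1) + 1/((J:ℝ)+1))/(2*π)
          = Real.log ((J:ℝ)+1)/(2*π) + 1/(2*π*((J:ℝ)+1)) := by
        field_simp
      push_cast
      push_cast at ih
      linarith
    · rw [Finset.disjoint_left]
      intro x hx hy
      simp only [Finset.mem_Ioc] at hx hy
      omega

lemma keyint (K J : ℕ) (hK : 1 ≤ K) (hJ : 1 ≤ J) :
    Real.log ((J:ℝ)+1) / (4*π*Real.log ((2*K*J+2 : ℕ):ℝ)) ≤
    ∫ t in Set.Icc (0:ℝ) (1/(2*(K:ℝ))),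
      |∑ n ∈ Finset.Icc 2 (2*K*J+2), Real.cos (2*π*(n:ℝ)*t)/Real.log n| := by
  have hπ := Real.pi_pos
  set N := 2*K*J+2 with hN
  set b : ℝ := 1/(2*(K:ℝ)) with hb
  have hKR : (0:ℝ) < K := by exact_mod_cast hK
  have hb0 : 0 < b := by rw [hb]; positivity
  have hN3 : 3 ≤ N := by
    have h1 : 1 ≤ K*J := Nat.mul_le_mul hK hJ
    have h2 : 2*K*J = 2*(K*J) := by ring
    omega
  have hNR : (1:ℝ) < N := by
    have : (3:ℕ) ≤ N := hN3
    have : (3:ℝ) ≤ (N:ℝ) := by exact_mod_cast this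
    linarith
  have hlogN : 0 < Real.log N := Real.log_pos hNR
  -- the partial sum
  set Sf : ℝ → ℝ := fun t => ∑ n ∈ Finset.Icc 2 N, Real.cos (2*π*(n:ℝ)*t)/Real.log n with hSf
  have hScont : Continuous Sf := by
    apply continuous_finset_sum
    intro n _
    exact (Real.continuous_cos.comp (continuous_const.mul continuous_id)).div_const _
  set T : ℝ := ∫ t in (0:ℝ)..b, Sf t * Real.sin (2*π*(N:ℝ)*t) with hT
  -- value of T
  have hTval : T = ∑ n ∈ Finset.Icc 2 N,
      (((∫ t in (0:ℝ)..b, Real.sin ((2*π*((N:ℝ)+n))*t))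
       + (∫ t in (0:ℝ)..b, Real.sin ((2*π*((N:ℝ)-n))*t)))/2)/Real.log n := by
    rw [hT]
    have h1 : ∀ t : ℝ, Sf t * Real.sin (2*π*(N:ℝ)*t)
        = ∑ n ∈ Finset.Icc 2 N, (Real.cos (2*π*(n:ℝ)*t) * Real.sin (2*π*(N:ℝ)*t))/Real.log n := by
      intro t
      rw [hSf, Finset.sum_mul]
      apply Finset.sum_congr rfl
      intro n _
      ring
    rw [intervalIntegral.integral_congr (fun t _ => h1 t)]
    rw [intervalIntegral.integral_finset_sum]
    · apply Finset.sum_congr rfl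
      intro n _
      rw [intervalIntegral.integral_div, intval]
    · intro n _
      apply Continuous.intervalIntegrable
      exact ((Real.continuous_cos.comp (continuous_const.mul continuous_id)).mul
        (Real.continuous_sin.comp (continuous_const.mul continuous_id))).div_const _
  -- lower bound for T
  have hstep : ∀ n ∈ Finset.Icc 2 N,
      (∫ t in (0:ℝ)..b, Real.sin ((2*π*((N:ℝ)-n))*t))/(2*Real.log N)
      ≤ (((∫ t in (0:ℝ)..b, Real.sin ((2*π*((N:ℝ)+n))*t))
       + (∫ t in (0:ℝ)..b, Real.sin ((2*π*((N:ℝ)-n))*t)))/2)/Real.log n := by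
    intro n hn
    simp only [Finset.mem_Icc] at hn
    have hnN : (n:ℝ) ≤ N := by exact_mod_cast hn.2
    have hn2 : (2:ℝ) ≤ n := by exact_mod_cast hn.1
    have hp : 0 ≤ ∫ t in (0:ℝ)..b, Real.sin ((2*π*((N:ℝ)+n))*t) :=
      Gnonneg b _ (by positivity)
    have hm : 0 ≤ ∫ t in (0:ℝ)..b, Real.sin ((2*π*((N:ℝ)-n))*t) :=
      Gnonneg b _ (by nlinarith)
    have hlogn : 0 < Real.log n := Real.log_pos (by linarith)
    have hloglog : Real.log n ≤ Real.log N := by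
      apply Real.log_le_log (by linarith) hnN
    calc (∫ t in (0:ℝ)..b, Real.sin ((2*π*((N:ℝ)-n))*t))/(2*Real.log N)
        ≤ (∫ t in (0:ℝ)..b, Real.sin ((2*π*((N:ℝ)-n))*t))/(2*Real.log n) := by
          apply div_le_div_of_nonneg_left hm (by positivity) (by linarith)
      _ ≤ _ := by
          rw [div_div]
          apply div_le_div_of_nonneg_right ?_ (by positivity)
          · linarith
  -- reindex and apply cum
  have hre : ∑ n ∈ Finset.Icc 2 N, (∫ t in (0:ℝ)..b, Real.sin ((2*π*((N:ℝ)-n))*t))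
      = ∑ k ∈ Finset.Icc 0 (N-2), (∫ t in (0:ℝ)..b, Real.sin ((2*π*((k:ℕ):ℝ))*t)) := by
    apply Finset.sum_nbij' (fun n => N - n) (fun k => N - k)
    · intro a ha; simp only [Finset.mem_Icc] at *; omega
    · intro a ha; simp only [Finset.mem_Icc] at *; omega
    · intro a ha; simp only [Finset.mem_Icc] at *; omega
    · intro a ha; simp only [Finset.mem_Icc] at *; omega
    · intro a ha
      simp only [Finset.mem_Icc] at ha
      congr 3
      rw [Nat.cast_sub ha.2]
  have hg0 : (∫ t in (0:ℝ)..b, Real.sin ((2*π*(((0:ℕ)):ℝ))*t)) = 0 := by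
    simp
  have hicc : ∑ k ∈ Finset.Icc 0 (N-2), (∫ t in (0:ℝ)..b, Real.sin ((2*π*((k:ℕ):ℝ))*t))
      = ∑ k ∈ Finset.Ioc 0 (N-2), (∫ t in (0:ℝ)..b, Real.sin ((2*π*((k:ℕ):ℝ))*t)) := by
    have hins : Finset.Icc 0 (N-2) = insert 0 (Finset.Ioc 0 (N-2)) := by
      ext x; simp only [Finset.mem_Icc, Finset.mem_insert, Finset.mem_Ioc]; omega
    rw [hins, Finset.sum_insert (by simp), hg0, zero_add]
  have hgval : ∀ k ∈ Finset.Ioc 0 (N-2), (∫ t in (0:ℝ)..b, Real.sin ((2*π*((k:ℕ):ℝ))*t))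
      = (1 - Real.cos (π * k / K))/(2*π*k) := by
    intro k hk
    simp only [Finset.mem_Ioc] at hk
    have hk0 : (0:ℝ) < k := by exact_mod_cast hk.1
    rw [Gval b _ (by positivity)]
    congr 2
    rw [hb]
    field_simp
  have hN2 : N - 2 = 2*K*J := by omega
  have hcum := cum K hK J
  have hsum2 : Real.log ((J:ℝ)+1) / (2*π)
      ≤ ∑ n ∈ Finset.Icc 2 N, (∫ t in (0:ℝ)..b, Real.sin ((2*π*((N:ℝ)-n))*t)) := by
    rw [hre, hicc, hN2]
    rw [Finset.sum_congr rfl (by rw [← hN2]; exact hgval)]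
    · rw [hN2] at *
      exact_mod_cast hcum
  have hTlow : Real.log ((J:ℝ)+1) / (2*π) / (2*Real.log N) ≤ T := by
    rw [hTval]
    calc Real.log ((J:ℝ)+1) / (2*π) / (2*Real.log N)
        ≤ (∑ n ∈ Finset.Icc 2 N, (∫ t in (0:ℝ)..b, Real.sin ((2*π*((N:ℝ)-n))*t)))/(2*Real.log N) := by
          apply div_le_div_of_nonneg_right hsum2 (by positivity)
      _ = ∑ n ∈ Finset.Icc 2 N, (∫ t in (0:ℝ)..b, Real.sin ((2*π*((N:ℝ)-n))*t))/(2*Real.log N) := by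
          rw [Finset.sum_div]
      _ ≤ _ := Finset.sum_le_sum hstep
  -- compare with the integral of |Sf|
  have hTle : T ≤ ∫ t in Set.Icc (0:ℝ) b, |Sf t| := by
    have h1 : T = ∫ t in Set.Icc (0:ℝ) b, Sf t * Real.sin (2*π*(N:ℝ)*t) := by
      rw [hT, intervalIntegral.integral_of_le hb0.le, MeasureTheory.integral_Icc_eq_integral_Ioc]
    rw [h1]
    apply MeasureTheory.setIntegral_mono_on
    · exact ((hScont.mul (Real.continuous_sin.comp (continuous_const.mul continuous_id)))).integrableOn_Icc
    · exact hScont.abs.integrableOn_Icc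
    · exact measurableSet_Icc
    · intro t _
      calc Sf t * Real.sin (2*π*(N:ℝ)*t) ≤ |Sf t * Real.sin (2*π*(N:ℝ)*t)| := le_abs_self _
        _ = |Sf t| * |Real.sin (2*π*(N:ℝ)*t)| := abs_mul _ _
        _ ≤ |Sf t| * 1 := by
            exact mul_le_mul_of_nonneg_left (Real.abs_sin_le_one _) (abs_nonneg _)
        _ = |Sf t| := mul_one _
  have hfinal : Real.log ((J:ℝ)+1) / (4*π*Real.log N)
      = Real.log ((J:ℝ)+1) / (2*π) / (2*Real.log N) := by
    rw [div_div]
    ring_nf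
  calc Real.log ((J:ℝ)+1) / (4*π*Real.log (N:ℝ)) = _ := hfinal
    _ ≤ T := hTlow
    _ ≤ _ := hTle

theorem stmt_16 (f : ℝ → ℝ)
    (hint : MeasureTheory.IntegrableOn f (Set.Icc (-(1/2) : ℝ) (1/2)))
    -- `f` has Fourier series `∑_{n ≥ 2} cos(2πnt)/log n`:
    (hcos : ∀ n : ℕ, (∫ t in Set.Icc (-(1/2) : ℝ) (1/2), f t * Real.cos (2 * Real.pi * n * t))
      = if 2 ≤ n then 1 / (2 * Real.log n) else 0)
    (hsin : ∀ n : ℕ, (∫ t in Set.Icc (-(1/2) : ℝ) (1/2), f t * Real.sin (2 * Real.pi * n * t)) = 0)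
    -- the `N`th symmetric Fourier partial sum of `f`
    (S : ℕ → ℝ → ℝ)
    (hS : ∀ N t, S N t = ∑ n ∈ Finset.Icc 2 N, Real.cos (2 * Real.pi * n * t) / Real.log n) :
    ¬ (∀ ε : ℝ, 0 < ε → ∃ δ : ℝ, 0 < δ ∧
        ∀ A : Set ℝ, MeasurableSet A → A ⊆ Set.Icc (-(1/2) : ℝ) (1/2) →
          MeasureTheory.volume A < ENNReal.ofReal δ →
          ∀ N : ℕ, 1 ≤ N → (∫ t in A, |S N t|) < ε) := by
  intro h
  have hπ := Real.pi_pos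
  obtain ⟨δ, hδ, hgood⟩ := h (1/(16*π)) (by positivity)
  set K : ℕ := ⌈1/δ⌉₊ + 1 with hKdef
  have hK : 1 ≤ K := by omega
  have hKR : (0:ℝ) < K := by exact_mod_cast hK
  set J : ℕ := (2*K+2)^3 with hJdef
  have hJ : 1 ≤ J := Nat.one_le_pow _ _ (by omega)
  set N : ℕ := 2*K*J + 2 with hNdef
  set b : ℝ := 1/(2*(K:ℝ)) with hbdef
  have hb0 : 0 < b := by positivity
  -- b < δ
  have hbδ : b < δ := by
    have h1 : 1/δ ≤ (⌈1/δ⌉₊ : ℝ) := Nat.le_ceil _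
    have h2 : 1/δ + 1 ≤ (K:ℝ) := by
      rw [hKdef]; push_cast; linarith
    rw [hbdef, div_lt_iff₀ (by positivity : (0:ℝ) < 2*(K:ℝ))]
    have h3 : 1 < δ * (1/δ + 1) := by
      rw [mul_add, mul_one_div, div_self hδ.ne']
      linarith
    nlinarith
  have hb12 : b ≤ 1/2 := by
    rw [hbdef]
    rw [div_le_div_iff₀ (by positivity) (by norm_num)]
    have hK1 : (1:ℝ) ≤ K := by exact_mod_cast hK
    linarith
  -- apply the hypothesis
  have happ := hgood (Set.Icc (0:ℝ) b) measurableSet_Icc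
    (fun x hx => by
      simp only [Set.mem_Icc] at *
      constructor <;> linarith [hx.1, hx.2])
    (by
      rw [Real.volume_Icc]
      apply (ENNReal.ofReal_lt_ofReal_iff hδ).mpr
      linarith)
    N (by omega)
  -- lower bound
  have hlow := keyint K J hK hJ
  rw [show (2*K*J+2 : ℕ) = N from rfl] at hlow
  have heq : (∫ t in Set.Icc (0:ℝ) b, |S N t|)
      = ∫ t in Set.Icc (0:ℝ) b, |∑ n ∈ Finset.Icc 2 N, Real.cos (2*π*(n:ℝ)*t)/Real.log n| := by
    simp only [hS]
  rw [heq] at happ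
  -- numeric bound
  have hnum : 1/(16*π) ≤ Real.log ((J:ℝ)+1) / (4*π*Real.log ((N:ℕ):ℝ)) := by
    have ha : 1 ≤ (2*K+2)^3 := Nat.one_le_pow _ _ (by omega)
    have hNle : N ≤ (2*K+2)^4 := by
      have e1 : (2*K+2)^4 = 2*K*(2*K+2)^3 + 2*((2*K+2)^3) := by ring
      have e2 : N = 2*K*((2*K+2)^3) + 2 := by rw [hNdef, hJdef]
      omega
    have hL : Real.log 4 ≤ Real.log ((2*K+2 : ℕ):ℝ) := by
      apply Real.log_le_log (by norm_num)
      have : (4:ℕ) ≤ 2*K+2 := by omega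
      exact_mod_cast this
    have hL0 : 0 < Real.log ((2*K+2 : ℕ):ℝ) := by
      have := Real.log_pos (by norm_num : (1:ℝ) < 4)
      linarith
    set L := Real.log ((2*K+2 : ℕ):ℝ) with hLdef
    have hlogN : Real.log ((N:ℕ):ℝ) ≤ 4*L := by
      calc Real.log ((N:ℕ):ℝ) ≤ Real.log (((2*K+2)^4 : ℕ):ℝ) := by
            apply Real.log_le_log (by positivity)
            exact_mod_cast hNle
        _ = 4*L := by
            rw [hLdef]
            push_cast
            rw [Real.log_pow]
            push_cast
            ring
    have hlogJ : 3*L ≤ Real.log ((J:ℝ)+1) := by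
      have h5 : Real.log ((J:ℕ):ℝ) = 3*L := by
        rw [hJdef, hLdef]
        push_cast
        rw [Real.log_pow]
        push_cast
        ring
      have h6 : Real.log ((J:ℕ):ℝ) ≤ Real.log ((J:ℝ)+1) := by
        apply Real.log_le_log (by positivity)
        linarith
      linarith
    have hlogN0 : 0 < Real.log ((N:ℕ):ℝ) := by
      apply Real.log_pos
      have : (3:ℕ) ≤ N := by
        have : 1 ≤ K*J := Nat.mul_le_mul hK hJ
        have h2 : 2*K*J = 2*(K*J) := by ring
        omega
      have : (3:ℝ) ≤ (N:ℝ) := by exact_mod_cast this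
      linarith
    rw [div_le_div_iff₀ (by positivity) (by positivity)]
    have : 4*π*Real.log ((N:ℕ):ℝ) ≤ 16*π*L := by nlinarith
    nlinarith
  linarith
end
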